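/- arXiv:2005.04801 — 8 statements merged into one kernel-verified Lean document; each statement's English description precedes it below -/
import Mathlib

section
/- For every integer n ≥ 2, the Apéry numbers satisfy the recurrence n^3·A(n) − (34n^3 − 51n^2 + 27n − 5)·A(n−1) + (n−1)^3·A(n−2) = 0. -/
def apery (n : ℕ) : ℕ := ∑ k ∈ Finset.range (n + 1), (n.choose k)^2 * ((n + k).choose k)^2

/-- WZ certificate function. -/
def hfun (m : ℕ) : ℕ → ℚ
  | 0 => 0
  | (j+1) => 4*(2*(m:ℚ)+3)*(2*(j:ℚ)^2+(j:ℚ)-4*(m:ℚ)^2-12*(m:ℚ)-9)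
      * (((m+1).choose j : ℚ))^2 * (((m+1+j).choose j : ℚ))^2

lemma key (N k : ℕ) :
    ((N:ℚ)+1-(k:ℚ)) * (((N+1).choose k : ℕ) : ℚ) = ((N:ℚ)+1) * ((N.choose k : ℕ) : ℚ) := by
  rcases le_or_gt k (N+1) with h | h
  · have hnat : (N+1).choose k * (N+1-k) = (N+1) * N.choose k := by
      rw [← Nat.choose_succ_right_eq, ← Nat.add_one_mul_choose_eq]
    have := congrArg (fun x : ℕ => (x : ℚ)) hnat
    push_cast [Nat.cast_sub h] at this
    linarith
  · rw [Nat.choose_eq_zero_of_lt h, Nat.choose_eq_zero_of_lt (by omega)]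
    simp

lemma key2 (N j : ℕ) :
    ((j:ℚ)+1) * ((N.choose (j+1) : ℕ) : ℚ) = ((N:ℚ)-(j:ℚ)) * ((N.choose j : ℕ) : ℚ) := by
  rcases le_or_gt j N with h | h
  · have hnat := Nat.choose_succ_right_eq N j
    have := congrArg (fun x : ℕ => (x : ℚ)) hnat
    push_cast [Nat.cast_sub h] at this
    linarith
  · rw [Nat.choose_eq_zero_of_lt (by omega), Nat.choose_eq_zero_of_lt h]
    simp

lemma local_id (m k : ℕ) :
    ((m:ℚ)+2)^3 * (((m+2).choose k : ℚ))^2 * (((m+2+k).choose k : ℚ))^2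
      - (34*(m:ℚ)^3+153*(m:ℚ)^2+231*(m:ℚ)+117)
        * (((m+1).choose k : ℚ))^2 * (((m+1+k).choose k : ℚ))^2
      + ((m:ℚ)+1)^3 * ((m.choose k : ℚ))^2 * (((m+k).choose k : ℚ))^2
      = hfun m (k+1) - hfun m k := by
  rcases k with _ | j
  · simp [hfun]
    ring
  · have hj : (j:ℚ)+1 ≠ 0 := by positivity
    have hm1 : (m:ℚ)+1 ≠ 0 := by positivity
    have hm2 : (m:ℚ)+2 ≠ 0 := by positivity
    set A : ℚ := ((m+1).choose j : ℚ) with hA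
    set B : ℚ := (((m+1+j).choose j : ℕ) : ℚ) with hB
    -- row relations
    have e1 : (((m+1).choose (j+1) : ℕ) : ℚ) = ((m:ℚ)+1-j)*A/((j:ℚ)+1) := by
      rw [eq_div_iff hj]
      have := key2 (m+1) j
      push_cast at this
      linarith
    have e2 : (((m+2).choose (j+1) : ℕ) : ℚ) = ((m:ℚ)+2)*A/((j:ℚ)+1) := by
      have hp : (m+2).choose (j+1) = (m+1).choose j + (m+1).choose (j+1) := by
        rw [show m+2 = (m+1)+1 by omega]; exact Nat.choose_succ_succ _ _
      rw [eq_div_iff hj]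
      have := congrArg (fun x : ℕ => (x : ℚ)) hp
      push_cast at this
      rw [this, e1]
      field_simp
      ring
    have e3 : ((m.choose (j+1) : ℕ) : ℚ)
        = ((m:ℚ)-j)*((m:ℚ)+1-j)*A/(((j:ℚ)+1)*((m:ℚ)+1)) := by
      have hk := key m (j+1)
      push_cast at hk
      rw [eq_div_iff (by positivity)]
      rw [e1] at hk
      field_simp at hk ⊢
      linarith
    -- column relations
    have e4 : (((m+(j+1)).choose (j+1) : ℕ) : ℚ) = ((m:ℚ)+1)*B/((j:ℚ)+1) := by
      have h2 := key2 (m+1+j) j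
      push_cast at h2
      rw [show m+(j+1) = m+1+j by omega, eq_div_iff hj]
      linarith
    have e5 : (((m+1+(j+1)).choose (j+1) : ℕ) : ℚ) = ((m:ℚ)+1+(j:ℚ)+1)*B/((j:ℚ)+1) := by
      have hp : (m+1+(j+1)).choose (j+1) = (m+1+j).choose j + (m+1+j).choose (j+1) := by
        rw [show m+1+(j+1) = (m+1+j)+1 by omega]; exact Nat.choose_succ_succ _ _
      have hcast := congrArg (fun x : ℕ => (x : ℚ)) hp
      push_cast at hcast
      have h2 := key2 (m+1+j) j
      push_cast at h2
      rw [hcast, eq_div_iff hj]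
      linear_combination h2
    have e6 : (((m+2+(j+1)).choose (j+1) : ℕ) : ℚ)
        = ((m:ℚ)+2+(j:ℚ)+1)*((m:ℚ)+1+(j:ℚ)+1)*B/(((m:ℚ)+2)*((j:ℚ)+1)) := by
      have hk := key (m+2+j) (j+1)
      push_cast at hk
      rw [show m+2+(j+1) = (m+2+j)+1 by omega, eq_div_iff (by positivity)]
      rw [show m+1+(j+1) = m+2+j by omega] at e5
      rw [e5] at hk
      field_simp at hk
      linear_combination hk
    simp only [hfun]
    push_cast
    rw [show m+1+(j+1) = m+2+j by omega] at *
    rw [e1, e2, e3, e4, e5, e6]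
    field_simp
    ring

lemma main_q (m : ℕ) :
    ((m:ℚ)+2)^3 * (apery (m+2) : ℚ)
      - (34*(m:ℚ)^3+153*(m:ℚ)^2+231*(m:ℚ)+117) * (apery (m+1) : ℚ)
      + ((m:ℚ)+1)^3 * (apery m : ℚ) = 0 := by
  have h2 : (apery (m+2) : ℚ)
      = ∑ k ∈ Finset.range (m+3), (((m+2).choose k : ℚ))^2 * (((m+2+k).choose k : ℚ))^2 := by
    simp only [apery]
    push_cast
    rfl
  have h1 : (apery (m+1) : ℚ)
      = ∑ k ∈ Finset.range (m+3), (((m+1).choose k : ℚ))^2 * (((m+1+k).choose k : ℚ))^2 := by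
    simp only [apery]
    push_cast
    rw [show m+3 = (m+2)+1 from rfl, Finset.sum_range_succ (n := m+2)]
    rw [Nat.choose_eq_zero_of_lt (by omega : m+1 < m+2)]
    push_cast
    ring
  have h0 : (apery m : ℚ)
      = ∑ k ∈ Finset.range (m+3), ((m.choose k : ℚ))^2 * (((m+k).choose k : ℚ))^2 := by
    simp only [apery]
    push_cast
    rw [show m+3 = (m+2)+1 from rfl, Finset.sum_range_succ (n := m+2),
      Finset.sum_range_succ (n := m+1)]
    rw [Nat.choose_eq_zero_of_lt (by omega : m < m+2), Nat.choose_eq_zero_of_lt (by omega : m < m+1)]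
    push_cast
    ring
  rw [h2, h1, h0, Finset.mul_sum, Finset.mul_sum, Finset.mul_sum, ← Finset.sum_sub_distrib,
    ← Finset.sum_add_distrib]
  have hcongr : ∑ k ∈ Finset.range (m+3),
      (((m:ℚ)+2)^3 * ((((m+2).choose k : ℚ))^2 * (((m+2+k).choose k : ℚ))^2)
        - (34*(m:ℚ)^3+153*(m:ℚ)^2+231*(m:ℚ)+117)
          * ((((m+1).choose k : ℚ))^2 * (((m+1+k).choose k : ℚ))^2)
        + ((m:ℚ)+1)^3 * (((m.choose k : ℚ))^2 * (((m+k).choose k : ℚ))^2))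
      = ∑ k ∈ Finset.range (m+3), (hfun m (k+1) - hfun m k) :=
    Finset.sum_congr rfl (fun k _ => by linear_combination local_id m k)
  rw [hcongr, Finset.sum_range_sub (hfun m)]
  rw [show m+3 = (m+2)+1 by omega]
  simp only [hfun]
  rw [Nat.choose_eq_zero_of_lt (by omega : m+1 < m+2)]
  push_cast
  ring

theorem apery_recurrence (n : ℕ) (hn : 2 ≤ n) :
    (n : ℤ)^3 * apery n - (34 * (n : ℤ)^3 - 51 * (n : ℤ)^2 + 27 * (n : ℤ) - 5) * apery (n - 1)
      + ((n : ℤ) - 1)^3 * apery (n - 2) = 0 := by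
  obtain ⟨m, rfl⟩ : ∃ m, n = m + 2 := ⟨n - 2, by omega⟩
  rw [show m+2-1 = m+1 by omega, show m+2-2 = m by omega]
  qify
  linear_combination main_q m
end

section
/- For every prime p, every d ∈ {0, 1, ..., p−1}, and every natural number n, the Apéry numbers satisfy the Lucas congruence A(d + p·n) ≡ A(d)·A(n) (mod p). -/
lemma sum_range_mul_decomp {M : Type*} [AddCommMonoid M] (f : ℕ → M) (p : ℕ) :
    ∀ n : ℕ, ∑ k ∈ Finset.range (p * n), f k
      = ∑ m ∈ Finset.range n, ∑ j ∈ Finset.range p, f (j + p * m)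
  | 0 => by simp
  | n + 1 => by
    rw [Nat.mul_succ, Finset.sum_range_add, sum_range_mul_decomp f p n,
      Finset.sum_range_succ]
    congr 1
    refine Finset.sum_congr rfl fun j _ => ?_
    rw [Nat.add_comm (p * n) j]

lemma lucas_cast (p : ℕ) [Fact p.Prime] (a b c e : ℕ) (ha : a < p) (hc : c < p) :
    (((a + p * b).choose (c + p * e) : ℕ) : ZMod p) = (a.choose c : ℕ) * (b.choose e : ℕ) := by
  have hp0 : 0 < p := (Fact.out : p.Prime).pos
  have h := Choose.choose_modEq_choose_mod_mul_choose_div_nat (p := p)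
    (n := a + p * b) (k := c + p * e)
  rw [Nat.add_mul_mod_self_left, Nat.add_mul_mod_self_left,
    Nat.add_mul_div_left _ _ hp0, Nat.add_mul_div_left _ _ hp0,
    Nat.mod_eq_of_lt ha, Nat.mod_eq_of_lt hc,
    Nat.div_eq_of_lt ha, Nat.div_eq_of_lt hc, Nat.zero_add, Nat.zero_add] at h
  have := (ZMod.natCast_eq_natCast_iff _ _ _).mpr h
  push_cast at this ⊢
  exact this

lemma choose_carry_zero (p : ℕ) [Fact p.Prime] (d j : ℕ) (hdp : d < p) (hjp : j < p)
    (h : p ≤ d + j) : (((d + j).choose j : ℕ) : ZMod p) = 0 := by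
  have h1 : d + j = (d + j - p) + p * 1 := by omega
  have h2 : j = j + p * 0 := by omega
  rw [h1]
  nth_rewrite 2 [h2]
  rw [lucas_cast p (d + j - p) 1 j 0 (by omega) hjp,
    Nat.choose_eq_zero_of_lt (by omega : d + j - p < j)]
  simp

theorem apery_lucas_mod_p (p : ℕ) (hp : p.Prime) (d : ℕ) (hd : d ≤ p - 1) (n : ℕ) :
    apery (d + p * n) ≡ apery d * apery n [MOD p] := by
  haveI : Fact p.Prime := ⟨hp⟩
  have hp0 : 0 < p := hp.pos
  have hdp : d < p := by omega
  rw [← ZMod.natCast_eq_natCast_iff]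
  set N := d + p * n with hN
  have hL : ((apery N : ℕ) : ZMod p)
      = ∑ k ∈ Finset.range (N + 1),
          ((N.choose k : ℕ) : ZMod p) ^ 2 * (((N + k).choose k : ℕ) : ZMod p) ^ 2 := by
    simp [apery]
  have hR : ((apery d * apery n : ℕ) : ZMod p)
      = (∑ j ∈ Finset.range (d + 1),
          ((d.choose j : ℕ) : ZMod p) ^ 2 * (((d + j).choose j : ℕ) : ZMod p) ^ 2)
        * (∑ m ∈ Finset.range (n + 1),
          ((n.choose m : ℕ) : ZMod p) ^ 2 * (((n + m).choose m : ℕ) : ZMod p) ^ 2) := by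
    simp [apery]
  rw [hL, hR]
  -- extend LHS sum to range (p * (n+1))
  have hsub : Finset.range (N + 1) ⊆ Finset.range (p * (n + 1)) := by
    apply Finset.range_subset_range.mpr; rw [hN]; nlinarith
  rw [Finset.sum_subset hsub (by
    intro k _ hk'
    simp only [Finset.mem_range, not_lt] at hk'
    rw [Nat.choose_eq_zero_of_lt (by omega)]
    simp)]
  rw [sum_range_mul_decomp _ p (n + 1)]
  -- extend RHS j-sum to range p
  rw [Finset.sum_subset (Finset.range_subset_range.mpr (by omega : d + 1 ≤ p)) (by
    intro j _ hj'
    simp only [Finset.mem_range, not_lt] at hj'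
    rw [Nat.choose_eq_zero_of_lt (by omega : d < j)]
    simp)]
  rw [Finset.sum_mul_sum, Finset.sum_comm]
  refine Finset.sum_congr rfl fun j hj => Finset.sum_congr rfl fun m hm => ?_
  simp only [Finset.mem_range] at hm hj
  have h1 : ((N.choose (j + p * m) : ℕ) : ZMod p)
      = (d.choose j : ℕ) * (n.choose m : ℕ) := lucas_cast p d n j m hdp hj
  by_cases hc : d + j < p
  · have h2 : N + (j + p * m) = (d + j) + p * (n + m) := by rw [hN]; ring
    rw [h2, lucas_cast p (d + j) (n + m) j m hc hj, h1]
    ring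
  · push_neg at hc
    have h2 : N + (j + p * m) = (d + j - p) + p * (n + m + 1) := by
      rw [hN, Nat.mul_add, Nat.mul_add, Nat.mul_one]; omega
    rw [h2, lucas_cast p (d + j - p) (n + m + 1) j m (by omega) hj,
      Nat.choose_eq_zero_of_lt (by omega : d + j - p < j),
      choose_carry_zero p d j hdp hj hc]
    simp
end

section
/- For every natural number n, A(n) ≡ 5^n (mod 8), where A denotes the Apéry numbers. -/
open Finset

/-- Central binomial coefficients `C(2k,k)` are even for `k ≥ 1`. -/
lemma central_even (m : ℕ) : 2 ∣ (2 * (m + 1)).choose (m + 1) := by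
  have h : 2 * (m + 1) = (2 * m + 1) + 1 := by ring
  rw [h, Nat.choose_succ_succ]
  have hsymm : (2 * m + 1).choose (m + 1) = (2 * m + 1).choose m := by
    have : (2 * m + 1) - m = m + 1 := by omega
    rw [← this, Nat.choose_symm (by omega)]
  rw [hsymm]
  exact ⟨(2 * m + 1).choose m, by ring⟩

/-- `C(n,k) * C(n+k,k)` is even for `1 ≤ k ≤ n`. -/
lemma x_even (n k : ℕ) (h1 : 1 ≤ k) (h2 : k ≤ n) :
    2 ∣ n.choose k * (n + k).choose k := by
  have key := Nat.choose_mul (n := n + k) (k := 2 * k) (s := k)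
    (by omega)
  have e1 : n + k - k = n := by omega
  have e2 : 2 * k - k = k := by omega
  rw [e1, e2] at key
  obtain ⟨m, rfl⟩ : ∃ m, k = m + 1 := ⟨k - 1, by omega⟩
  have h2d : 2 ∣ (n + (m+1)).choose (2 * (m+1)) * (2 * (m+1)).choose (m+1) :=
    Dvd.dvd.mul_left (central_even m) _
  rw [key] at h2d
  rw [mul_comm]
  exact h2d

/-- Squaring a sum of even numbers, mod 8, is the sum of squares. -/
lemma sq_sum_even_mod8 (s : Finset ℕ) (f : ℕ → ℕ) (hf : ∀ i ∈ s, 2 ∣ f i) :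
    (∑ i ∈ s, f i) ^ 2 ≡ ∑ i ∈ s, (f i) ^ 2 [MOD 8] := by
  induction s using Finset.induction_on with
  | empty => simp; rfl
  | @insert a s ha ih =>
    rw [Finset.sum_insert ha, Finset.sum_insert ha]
    have hfa : 2 ∣ f a := hf a (Finset.mem_insert_self a s)
    have hfs : 2 ∣ ∑ i ∈ s, f i := Finset.dvd_sum fun i hi => hf i (Finset.mem_insert_of_mem hi)
    obtain ⟨u, hu⟩ := hfa
    obtain ⟨v, hv⟩ := hfs
    have expand : (f a + ∑ i ∈ s, f i) ^ 2 = (f a) ^ 2 + (∑ i ∈ s, f i) ^ 2 + 8 * (u * v) := by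
      rw [hu, hv]; ring
    rw [expand]
    have h8 : (f a) ^ 2 + (∑ i ∈ s, f i) ^ 2 + 8 * (u * v)
        ≡ (f a) ^ 2 + (∑ i ∈ s, f i) ^ 2 + 0 [MOD 8] :=
      Nat.ModEq.add_left _ ((Nat.modEq_zero_iff_dvd.2 ⟨u * v, rfl⟩))
    calc (f a) ^ 2 + (∑ i ∈ s, f i) ^ 2 + 8 * (u * v)
        ≡ (f a) ^ 2 + (∑ i ∈ s, f i) ^ 2 + 0 [MOD 8] := h8
      _ = (f a) ^ 2 + (∑ i ∈ s, f i) ^ 2 := by ring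
      _ ≡ (f a) ^ 2 + ∑ i ∈ s, (f i) ^ 2 [MOD 8] :=
          Nat.ModEq.add_left _ (ih fun i hi => hf i (Finset.mem_insert_of_mem hi))

/-- The Delannoy-type identity: `∑ C(n,k)C(n+k,k) = ∑ C(n,a)² 2^(n-a)`. -/
lemma delannoy_eq (n : ℕ) :
    ∑ k ∈ range (n + 1), n.choose k * (n + k).choose k
      = ∑ a ∈ range (n + 1), (n.choose a) ^ 2 * 2 ^ (n - a) := by
  have step1 : ∑ k ∈ range (n + 1), n.choose k * (n + k).choose k
      = ∑ k ∈ range (n + 1), ∑ a ∈ range (k + 1),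
          (n.choose a) ^ 2 * (n - a).choose (k - a) := by
    refine Finset.sum_congr rfl fun k hk => ?_
    have hkn : k ≤ n := by simpa using Nat.lt_succ_iff.mp (Finset.mem_range.mp hk)
    rw [Nat.add_choose_eq, Finset.Nat.sum_antidiagonal_eq_sum_range_succ_mk, Finset.mul_sum]
    refine Finset.sum_congr rfl fun a ha => ?_
    have hak : a ≤ k := Nat.lt_succ_iff.mp (Finset.mem_range.mp ha)
    have hsymm : k.choose (k - a) = k.choose a := Nat.choose_symm hak
    have hmul : n.choose k * k.choose a = n.choose a * (n - a).choose (k - a) :=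
      Nat.choose_mul hak
    calc n.choose k * (n.choose a * k.choose (k - a))
        = n.choose a * (n.choose k * k.choose a) := by rw [hsymm]; ring
      _ = n.choose a * (n.choose a * (n - a).choose (k - a)) := by rw [hmul]
      _ = (n.choose a) ^ 2 * (n - a).choose (k - a) := by ring
  rw [step1]
  have step2 : ∑ k ∈ range (n + 1), ∑ a ∈ range (k + 1),
          (n.choose a) ^ 2 * (n - a).choose (k - a)
      = ∑ a ∈ range (n + 1), ∑ k ∈ Finset.Ico a (n + 1),
          (n.choose a) ^ 2 * (n - a).choose (k - a) := by
    simp only [Finset.range_eq_Ico]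
    rw [← Finset.sum_Ico_Ico_comm]
  rw [step2]
  refine Finset.sum_congr rfl fun a ha => ?_
  have han : a ≤ n := Nat.lt_succ_iff.mp (Finset.mem_range.mp ha)
  rw [Finset.sum_Ico_eq_sum_range]
  have hcard : n + 1 - a = (n - a) + 1 := by omega
  rw [hcard, ← Finset.mul_sum]
  congr 1
  calc ∑ i ∈ range ((n - a) + 1), (n - a).choose (a + i - a)
      = ∑ i ∈ range ((n - a) + 1), (n - a).choose i := by
        refine Finset.sum_congr rfl fun i _ => ?_
        congr 1
        omega
    _ = 2 ^ (n - a) := Nat.sum_range_choose (n - a)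

lemma five_pow_even (c : ℕ) : 5 ^ (2 * c) ≡ 1 [MOD 8] := by
  have h : (25 : ℕ) ^ c ≡ 1 ^ c [MOD 8] := Nat.ModEq.pow c (by decide)
  simpa [pow_mul] using h

theorem apery_mod_eight (n : ℕ) : apery n ≡ 5 ^ n [MOD 8] := by
  set x : ℕ → ℕ := fun k => n.choose k * (n + k).choose k with hx
  have hA : apery n = (∑ i ∈ range n, (x (i + 1)) ^ 2) + 1 := by
    rw [apery, Finset.sum_range_succ']
    simp [hx, mul_pow]
  have hD : ∑ k ∈ range (n + 1), x k = (∑ i ∈ range n, x (i + 1)) + 1 := by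
    rw [Finset.sum_range_succ']
    simp [hx]
  set S := ∑ i ∈ range n, x (i + 1) with hS
  have hsq : S ^ 2 ≡ ∑ i ∈ range n, (x (i + 1)) ^ 2 [MOD 8] := by
    refine sq_sum_even_mod8 _ _ fun i hi => ?_
    have hin : i < n := Finset.mem_range.mp hi
    exact x_even n (i + 1) (by omega) (by omega)
  have hA8 : apery n ≡ S ^ 2 + 1 [MOD 8] := by
    rw [hA]
    exact (Nat.ModEq.add_right 1 hsq).symm
  cases n with
  | zero => rfl
  | succ m =>
    -- compute S mod 4
    have hDval := delannoy_eq (m + 1)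
    have hf1 : ((m + 1).choose (m + 1)) ^ 2 * 2 ^ (m + 1 - (m + 1)) = 1 := by
      simp
    have hf2 : ((m + 1).choose m) ^ 2 * 2 ^ (m + 1 - m) = 2 * (m + 1) ^ 2 := by
      rw [Nat.choose_succ_self_right]
      have : m + 1 - m = 1 := by omega
      rw [this]; ring
    have h4 : 4 ∣ ∑ a ∈ range m, ((m + 1).choose a) ^ 2 * 2 ^ (m + 1 - a) := by
      refine Finset.dvd_sum fun a ha => ?_
      have hal : a < m := Finset.mem_range.mp ha
      have h2le : 2 ≤ m + 1 - a := by omega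
      have : (4 : ℕ) = 2 ^ 2 := by norm_num
      rw [this]
      exact Dvd.dvd.mul_left (pow_dvd_pow 2 h2le) _
    obtain ⟨t, ht⟩ := h4
    have hRHS : ∑ a ∈ range (m + 1 + 1), ((m + 1).choose a) ^ 2 * 2 ^ (m + 1 - a)
        = 4 * t + 2 * (m + 1) ^ 2 + 1 := by
      rw [Finset.sum_range_succ, Finset.sum_range_succ, hf1, hf2, ht]
    have hSval : S = 4 * t + 2 * (m + 1) ^ 2 := by
      have h := hD
      rw [hDval, hRHS] at h
      omega
    rcases Nat.even_or_odd (m + 1) with he | ho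
    · obtain ⟨c, hc⟩ := he
      have hn : m + 1 = 2 * c := by omega
      have hSform : S = 4 * (t + 2 * c ^ 2) := by
        rw [hSval, hc]; ring
      have h1 : S ^ 2 + 1 ≡ 1 [MOD 8] := by
        rw [hSform]
        have : (4 * (t + 2 * c ^ 2)) ^ 2 + 1 = 8 * (2 * (t + 2 * c ^ 2) ^ 2) + 1 := by ring
        rw [this]
        unfold Nat.ModEq
        omega
      calc apery (m + 1) ≡ S ^ 2 + 1 [MOD 8] := hA8
        _ ≡ 1 [MOD 8] := h1
        _ ≡ 5 ^ (m + 1) [MOD 8] := by rw [hn]; exact (five_pow_even c).symm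
    · obtain ⟨c, hc⟩ := ho
      have hSform : S = 4 * (t + 2 * c ^ 2 + 2 * c) + 2 := by
        rw [hSval, hc]; ring
      have h1 : S ^ 2 + 1 ≡ 5 [MOD 8] := by
        rw [hSform]
        have : (4 * (t + 2 * c ^ 2 + 2 * c) + 2) ^ 2 + 1
            = 8 * (2 * (t + 2 * c ^ 2 + 2 * c) ^ 2 + 2 * (t + 2 * c ^ 2 + 2 * c)) + 5 := by ring
        rw [this]
        unfold Nat.ModEq
        omega
      have h5pow : (5 : ℕ) ^ (m + 1) ≡ 5 [MOD 8] := by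
        rw [hc, pow_succ]
        calc (5:ℕ) ^ (2 * c) * 5 ≡ 1 * 5 [MOD 8] := (five_pow_even c).mul_right 5
          _ = 5 := by ring
      calc apery (m + 1) ≡ S ^ 2 + 1 [MOD 8] := hA8
        _ ≡ 5 [MOD 8] := h1
        _ ≡ 5 ^ (m + 1) [MOD 8] := h5pow.symm
end

section
/- For every d ∈ {0, 1, 2} and every natural number n, A(d + 3n) ≡ A(d)·A(n) (mod 9), where A denotes the Apéry numbers. -/
namespace Ap9

open Polynomial

abbrev R := ZMod 9

noncomputable def P : R[X] := X + 1
noncomputable def Q : R[X] := X ^ 3 + 1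

lemma coeff_P_pow (n k : ℕ) : (P ^ n).coeff k = (n.choose k : R) := by
  simp [P, coeff_X_add_one_pow]

lemma Q_eq : Q = expand R 3 P := by
  simp [P, Q, Polynomial.expand_X]

lemma coeff_Q_pow (s k : ℕ) :
    (Q ^ s).coeff k = if 3 ∣ k then (s.choose (k / 3) : R) else 0 := by
  rw [Q_eq, ← map_pow, Polynomial.coeff_expand (by norm_num)]
  simp [coeff_P_pow]

lemma coeff_term (a : R) (t u k : ℕ) :
    (C a * (Q ^ t * X ^ u)).coeff k =
      if u ≤ k ∧ 3 ∣ (k - u) then a * (t.choose ((k - u) / 3) : R) else 0 := by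
  rw [coeff_C_mul, coeff_mul_X_pow']
  by_cases h : u ≤ k
  · simp only [h, true_and, coeff_Q_pow]
    split_ifs <;> simp
  · simp [h]

lemma h9 : (9 : R[X]) = 0 := by
  have h : ((9 : ℕ) : R[X]) = C ((9 : ℕ) : R) := (map_natCast C 9).symm
  have h2 : ((9 : ℕ) : R) = 0 := by decide
  rw [h2, map_zero] at h
  exact_mod_cast h

lemma hPQ : P ^ 3 = Q + 3 * (X * P) := by
  simp only [P, Q]; ring

lemma P_pow (s : ℕ) :
    P ^ (3 * (s + 1)) = Q ^ (s + 1) + ((3 * (s + 1) : ℕ) : R[X]) * (X * P) * Q ^ s := by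
  induction s with
  | zero => simpa using hPQ
  | succ n ih =>
    have h : 3 * (n + 1 + 1) = 3 * (n + 1) + 3 := by ring
    rw [h, pow_add, ih, hPQ]
    push_cast
    linear_combination (((n : R[X]) + 1) * X ^ 2 * P ^ 2 * Q ^ n) * h9

/-- the scalar 3*(s+1) as element of R -/
noncomputable def c (s : ℕ) : R := ((3 * (s + 1) : ℕ) : R)

lemma hc3 (s : ℕ) : (3 : R[X]) * C (c s) = 0 := by
  have h1 : (3 : R[X]) = C (3 : R) := (map_ofNat C 3).symm
  rw [h1, ← map_mul]
  have h : (3 : R) * c s = 0 := by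
    have h9' : (9 : R) = 0 := by decide
    unfold c
    push_cast
    linear_combination ((s : R) + 1) * h9'
  rw [h, map_zero]

lemma cast_nat_C (s : ℕ) : ((3 * (s + 1) : ℕ) : R[X]) = C (c s) := by
  unfold c; exact (map_natCast C _).symm

lemma expA (s : ℕ) : P ^ (3 * (s + 1)) =
    C 1 * (Q ^ (s+1) * X ^ 0) + C (c s) * (Q ^ s * X ^ 1) + C (c s) * (Q ^ s * X ^ 2) := by
  rw [P_pow s, cast_nat_C]
  simp only [P, map_one]
  ring

lemma expB (s : ℕ) : P ^ (3 * (s + 1) + 1) =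
    C 1 * (Q ^ (s+1) * X ^ 0) + C 1 * (Q ^ (s+1) * X ^ 1) + C (c s) * (Q ^ s * X ^ 1)
      + C (2 * c s) * (Q ^ s * X ^ 2) + C (c s) * (Q ^ s * X ^ 3) := by
  rw [pow_add, P_pow s, cast_nat_C]
  simp only [P, map_one, map_mul, map_ofNat]
  ring

lemma expC (s : ℕ) : P ^ (3 * (s + 1) + 2) =
    C 1 * (Q ^ (s+1) * X ^ 0) + C (2 + c s) * (Q ^ (s+1) * X ^ 1) + C 1 * (Q ^ (s+1) * X ^ 2) := by
  rw [pow_add, P_pow s, cast_nat_C]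
  have h := hc3 s
  simp only [P, Q, map_one, map_add, map_ofNat]
  linear_combination (X ^ 2 * (X + 1) * (X ^ 3 + 1) ^ s) * h

lemma L1 (m j : ℕ) : ((3*m).choose (3*j) : R) = (m.choose j : R) := by
  cases m with
  | zero =>
    cases j with
    | zero => norm_num
    | succ i => simp [Nat.choose_eq_zero_of_lt (by omega : (0:ℕ) < 3*(i+1))]
  | succ s =>
    rw [← coeff_P_pow, expA s, coeff_add, coeff_add, coeff_term, coeff_term, coeff_term]
    rw [if_pos (by omega : 0 ≤ 3*j ∧ 3 ∣ 3*j - 0), if_neg (by omega : ¬(1 ≤ 3*j ∧ 3 ∣ 3*j - 1)),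
      if_neg (by omega : ¬(2 ≤ 3*j ∧ 3 ∣ 3*j - 2))]
    have h : (3*j - 0)/3 = j := by omega
    rw [h]; ring

lemma L2 (m j : ℕ) : ((3*m+2).choose (3*j) : R) = (m.choose j : R) := by
  cases m with
  | zero =>
    cases j with
    | zero => norm_num
    | succ i => simp [Nat.choose_eq_zero_of_lt (by omega : (2:ℕ) < 3*(i+1))]
  | succ s =>
    rw [← coeff_P_pow, expC s, coeff_add, coeff_add, coeff_term, coeff_term, coeff_term]
    rw [if_pos (by omega : 0 ≤ 3*j ∧ 3 ∣ 3*j - 0), if_neg (by omega : ¬(1 ≤ 3*j ∧ 3 ∣ 3*j - 1)),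
      if_neg (by omega : ¬(2 ≤ 3*j ∧ 3 ∣ 3*j - 2))]
    have h : (3*j - 0)/3 = j := by omega
    rw [h]; ring

lemma L5 (m j : ℕ) : ((3*m+2).choose (3*j+1) : R) = (2 + 3*(m:R)) * (m.choose j : R) := by
  cases m with
  | zero =>
    cases j with
    | zero => norm_num
    | succ i => simp [Nat.choose_eq_zero_of_lt (by omega : (2:ℕ) < 3*(i+1)+1)]
  | succ s =>
    rw [← coeff_P_pow, expC s, coeff_add, coeff_add, coeff_term, coeff_term, coeff_term]
    rw [if_neg (by omega : ¬(0 ≤ 3*j+1 ∧ 3 ∣ 3*j+1 - 0)),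
      if_pos (by omega : 1 ≤ 3*j+1 ∧ 3 ∣ 3*j+1 - 1),
      if_neg (by omega : ¬(2 ≤ 3*j+1 ∧ 3 ∣ 3*j+1 - 2))]
    have h : (3*j+1 - 1)/3 = j := by omega
    rw [h]
    unfold c
    push_cast
    ring

lemma L3 (m j : ℕ) : ((3*m+1).choose (3*j) : R) = (1 + 3*(j:R)) * (m.choose j : R) := by
  cases m with
  | zero =>
    cases j with
    | zero => norm_num
    | succ i => simp [Nat.choose_eq_zero_of_lt (by omega : (1:ℕ) < 3*(i+1))]
  | succ s =>
    rw [← coeff_P_pow, expB s, coeff_add, coeff_add, coeff_add, coeff_add,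
      coeff_term, coeff_term, coeff_term, coeff_term, coeff_term]
    rw [if_pos (by omega : 0 ≤ 3*j ∧ 3 ∣ 3*j - 0), if_neg (by omega : ¬(1 ≤ 3*j ∧ 3 ∣ 3*j - 1)),
      if_neg (by omega : ¬(1 ≤ 3*j ∧ 3 ∣ 3*j - 1)), if_neg (by omega : ¬(2 ≤ 3*j ∧ 3 ∣ 3*j - 2))]
    have h0 : (3*j - 0)/3 = j := by omega
    rw [h0]
    cases j with
    | zero =>
      rw [if_neg (by omega : ¬(3 ≤ 3*0 ∧ 3 ∣ 3*0 - 3))]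
      norm_num
    | succ i =>
      rw [if_pos (by omega : 3 ≤ 3*(i+1) ∧ 3 ∣ 3*(i+1) - 3)]
      have h1 : (3*(i+1) - 3)/3 = i := by omega
      rw [h1]
      have key : (s+1) * Nat.choose s i = Nat.choose (s+1) (i+1) * (i+1) :=
        Nat.add_one_mul_choose_eq s i
      have keyR : (((s+1) * Nat.choose s i : ℕ) : R)
          = ((Nat.choose (s+1) (i+1) * (i+1) : ℕ) : R) := by
        exact_mod_cast congrArg (fun x : ℕ => (x : R)) key
      push_cast at keyR
      unfold c
      push_cast
      linear_combination 3 * keyR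

lemma I1 (s j : ℕ) :
    (s+1) * Nat.choose s j + j * Nat.choose (s+1) j = (s+1) * Nat.choose (s+1) j := by
  rcases le_or_gt j (s+1) with h | h
  · have h2 : (s+1) * Nat.choose s j = Nat.choose (s+1) j * (s+1-j) := by
      rw [Nat.add_one_mul_choose_eq, Nat.choose_succ_right_eq]
    have h3 : s+1-j+j = s+1 := by omega
    rw [h2, mul_comm j (Nat.choose (s+1) j), ← Nat.mul_add, h3, Nat.mul_comm]
  · rw [Nat.choose_eq_zero_of_lt (by omega : s < j), Nat.choose_eq_zero_of_lt h]
    simp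

lemma L4 (m j : ℕ) : ((3*m+1).choose (3*j+1) : R) = (1 + 3*(m:R) - 3*(j:R)) * (m.choose j : R) := by
  cases m with
  | zero =>
    cases j with
    | zero => norm_num
    | succ i => simp [Nat.choose_eq_zero_of_lt (by omega : (1:ℕ) < 3*(i+1)+1),
        Nat.choose_eq_zero_of_lt (by omega : (0:ℕ) < i+1)]
  | succ s =>
    rw [← coeff_P_pow, expB s, coeff_add, coeff_add, coeff_add, coeff_add,
      coeff_term, coeff_term, coeff_term, coeff_term, coeff_term]
    rw [if_neg (by omega : ¬(0 ≤ 3*j+1 ∧ 3 ∣ 3*j+1 - 0)),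
      if_pos (by omega : 1 ≤ 3*j+1 ∧ 3 ∣ 3*j+1 - 1),
      if_pos (by omega : 1 ≤ 3*j+1 ∧ 3 ∣ 3*j+1 - 1),
      if_neg (by omega : ¬(2 ≤ 3*j+1 ∧ 3 ∣ 3*j+1 - 2)),
      if_neg (by omega : ¬(3 ≤ 3*j+1 ∧ 3 ∣ 3*j+1 - 3))]
    have h : (3*j+1 - 1)/3 = j := by omega
    rw [h]
    have keyR : (((s+1) * Nat.choose s j + j * Nat.choose (s+1) j : ℕ) : R)
        = (((s+1) * Nat.choose (s+1) j : ℕ) : R) := by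
      exact_mod_cast congrArg (fun x : ℕ => (x : R)) (I1 s j)
    push_cast at keyR
    unfold c
    push_cast
    linear_combination 3 * keyR

lemma Z (a d b e : ℕ) (hd : d < 3) (he : e < 3) (hde : d < e) :
    (3:ℕ) ∣ (3*a+d).choose (3*b+e) := by
  haveI : Fact (Nat.Prime 3) := ⟨by norm_num⟩
  have h := Choose.choose_modEq_choose_mod_mul_choose_div_nat (p := 3) (n := 3*a+d) (k := 3*b+e)
  have h1 : (3*a+d) % 3 = d := by omega
  have h2 : (3*a+d) / 3 = a := by omega
  have h3 : (3*b+e) % 3 = e := by omega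
  have h4 : (3*b+e) / 3 = b := by omega
  rw [h1, h2, h3, h4, Nat.choose_eq_zero_of_lt hde, zero_mul] at h
  exact (Nat.modEq_zero_iff_dvd).1 h

lemma sqz {x : ℕ} (h : (3:ℕ) ∣ x) : ((x : R))^2 = 0 := by
  obtain ⟨y, rfl⟩ := h
  have h9 : (9 : R) = 0 := by decide
  push_cast
  linear_combination ((y:R))^2 * h9

noncomputable def g (n k : ℕ) : R := (n.choose k : R)^2 * ((n+k).choose k : R)^2

lemma K0 (m j : ℕ) : g (3*m) (3*j) + g (3*m) (3*j+1) + g (3*m) (3*j+2) = g m j := by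
  unfold g
  have e1 : 3*m + 3*j = 3*(m+j) := by ring
  rw [e1, L1, L1]
  have z1 : ((3*m).choose (3*j+1) : R)^2 = 0 := by
    have := sqz (Z m 0 j 1 (by norm_num) (by norm_num) (by norm_num)); simpa using this
  have z2 : ((3*m).choose (3*j+2) : R)^2 = 0 := by
    have := sqz (Z m 0 j 2 (by norm_num) (by norm_num) (by norm_num)); simpa using this
  rw [z1, z2]
  ring

lemma K1 (m j : ℕ) : g (3*m+1) (3*j) + g (3*m+1) (3*j+1) + g (3*m+1) (3*j+2) = 5 * g m j := by
  unfold g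
  have e1 : 3*m+1 + 3*j = 3*(m+j)+1 := by ring
  have e2 : 3*m+1 + (3*j+1) = 3*(m+j)+2 := by ring
  rw [e1, e2, L3, L3, L4, L5]
  rw [sqz (Z m 1 j 2 (by norm_num) (by norm_num) (by norm_num))]
  have key : ∀ a b : R, ((1+3*b))^2*((1+3*b))^2 + ((1+3*a-3*b))^2*((2+3*(a+b)))^2 = 5 := by decide
  have h := key (m : R) (j : R)
  push_cast
  push_cast at h
  linear_combination (((m.choose j : R))^2 * (((m+j).choose j : R))^2) * h

lemma K2 (m j : ℕ) : g (3*m+2) (3*j) + g (3*m+2) (3*j+1) + g (3*m+2) (3*j+2) = g m j := by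
  unfold g
  have e1 : 3*m+2 + 3*j = 3*(m+j) + 2 := by ring
  have e2 : 3*m+2 + (3*j+1) = 3*(m+j+1) := by ring
  have e3 : 3*m+2 + (3*j+2) = 3*(m+j+1)+1 := by ring
  rw [e1, e2, e3, L2, L2]
  have z1 : ((3*(m+j+1)).choose (3*j+1) : R)^2 = 0 := by
    have := sqz (Z (m+j+1) 0 j 1 (by norm_num) (by norm_num) (by norm_num)); simpa using this
  rw [z1, sqz (Z (m+j+1) 1 j 2 (by norm_num) (by norm_num) (by norm_num))]
  ring

lemma sum3 (f : ℕ → R) (n : ℕ) :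
    ∑ k ∈ Finset.range (3*(n+1)), f k
      = ∑ j ∈ Finset.range (n+1), (f (3*j) + f (3*j+1) + f (3*j+2)) := by
  induction n with
  | zero => simp [Finset.sum_range_succ]
  | succ n ih =>
    have h : 3*(n+1+1) = 3*(n+1)+1+1+1 := by ring
    rw [h, Finset.sum_range_succ, Finset.sum_range_succ, Finset.sum_range_succ, ih,
      Finset.sum_range_succ]
    conv_rhs => rw [Finset.sum_range_succ, Finset.sum_range_succ]
    ring

lemma apery_cast (N M : ℕ) (h : N + 1 ≤ M) :
    ((apery N : ℕ) : R) = ∑ k ∈ Finset.range M, g N k := by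
  unfold apery
  push_cast
  refine Finset.sum_subset (Finset.range_subset_range.2 h) ?_
  intro k _ hk
  have hlt : N < k := by simp only [Finset.mem_range] at hk; omega
  simp [g, Nat.choose_eq_zero_of_lt hlt]

end Ap9

open Ap9

theorem apery_lucas_mod_nine (d : ℕ) (hd : d ≤ 2) (n : ℕ) :
    apery (d + 3 * n) ≡ apery d * apery n [MOD 9] := by
  have cast_iff := ZMod.natCast_eq_natCast_iff (apery (d + 3*n)) (apery d * apery n) 9
  rw [← cast_iff]
  have hn : ((apery n : ℕ) : R) = ∑ j ∈ Finset.range (n+1), g n j := apery_cast n (n+1) le_rfl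
  interval_cases d
  · have h0 : (0 : ℕ) + 3*n = 3*n := by ring
    rw [h0]
    have lhs : ((apery (3*n) : ℕ) : R) = ∑ k ∈ Finset.range (3*(n+1)), g (3*n) k :=
      apery_cast _ _ (by omega)
    rw [lhs, sum3]
    have h : ∑ j ∈ Finset.range (n+1), (g (3*n) (3*j) + g (3*n) (3*j+1) + g (3*n) (3*j+2))
        = ∑ j ∈ Finset.range (n+1), g n j :=
      Finset.sum_congr rfl (fun j _ => K0 n j)
    rw [h]
    have ha : apery 0 = 1 := by decide
    push_cast [ha]
    rw [hn]; ring
  · have h0 : (1 : ℕ) + 3*n = 3*n+1 := by ring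
    rw [h0]
    have lhs : ((apery (3*n+1) : ℕ) : R) = ∑ k ∈ Finset.range (3*(n+1)), g (3*n+1) k :=
      apery_cast _ _ (by omega)
    rw [lhs, sum3]
    have h : ∑ j ∈ Finset.range (n+1), (g (3*n+1) (3*j) + g (3*n+1) (3*j+1) + g (3*n+1) (3*j+2))
        = ∑ j ∈ Finset.range (n+1), 5 * g n j :=
      Finset.sum_congr rfl (fun j _ => K1 n j)
    rw [h, ← Finset.mul_sum]
    have ha : apery 1 = 5 := by decide
    push_cast [ha]
    rw [hn]
  · have h0 : (2 : ℕ) + 3*n = 3*n+2 := by ring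
    rw [h0]
    have lhs : ((apery (3*n+2) : ℕ) : R) = ∑ k ∈ Finset.range (3*(n+1)), g (3*n+2) k :=
      apery_cast _ _ (by omega)
    rw [lhs, sum3]
    have h : ∑ j ∈ Finset.range (n+1), (g (3*n+2) (3*j) + g (3*n+2) (3*j+1) + g (3*n+2) (3*j+2))
        = ∑ j ∈ Finset.range (n+1), g n j :=
      Finset.sum_congr rfl (fun j _ => K2 n j)
    rw [h]
    have ha : apery 2 = 73 := by decide
    push_cast [ha]
    rw [hn]
    have h73 : (73 : R) = 1 := by decide
    rw [h73, one_mul]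
end

section
/- For every prime p ≥ 5 and every natural number n, A(p·n) ≡ A(n) (mod p^3), where A denotes the Apéry numbers. -/
open Finset

namespace AperyAux

lemma sum_range_mul {M : Type*} [AddCommMonoid M] (f : ℕ → M) (m k : ℕ) :
    ∑ i ∈ range (m * k), f i = ∑ t ∈ range m, ∑ j ∈ range k, f (t * k + j) := by
  induction m with
  | zero => simp
  | succ m ih =>
      rw [Nat.succ_mul, Finset.sum_range_add, ih, Finset.sum_range_succ]

lemma prod_range_two_mul {M : Type*} [CommMonoid M] (f : ℕ → M) (m : ℕ) :
    ∏ j ∈ range (2 * m), f j = ∏ i ∈ range m, (f i * f (2 * m - 1 - i)) := by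
  rw [two_mul, Finset.prod_range_add,
    ← Finset.prod_range_reflect (fun j => f (m + j)) m, ← Finset.prod_mul_distrib]
  refine Finset.prod_congr rfl fun i hi => ?_
  rw [Finset.mem_range] at hi
  have h : m + (m - 1 - i) = m + m - 1 - i := by omega
  rw [h]

lemma sum_range_two_mul {M : Type*} [AddCommMonoid M] (f : ℕ → M) (m : ℕ) :
    ∑ j ∈ range (2 * m), f j = ∑ i ∈ range m, (f i + f (2 * m - 1 - i)) := by
  rw [two_mul, Finset.sum_range_add,
    ← Finset.sum_range_reflect (fun j => f (m + j)) m, ← Finset.sum_add_distrib]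
  refine Finset.sum_congr rfl fun i hi => ?_
  rw [Finset.mem_range] at hi
  have h : m + (m - 1 - i) = m + m - 1 - i := by omega
  rw [h]

lemma cast_choose_p_sub_one {p : ℕ} (hp : p.Prime) :
    ∀ i, i < p → (((p - 1).choose i : ℕ) : ZMod p) = (-1) ^ i := by
  haveI := Fact.mk hp
  intro i
  induction i with
  | zero => simp
  | succ i ih =>
      intro h
      have hi : i < p := by omega
      have h1 : ((i + 1 : ℕ) : ZMod p) ≠ 0 := by
        rw [Ne, ZMod.natCast_eq_zero_iff]
        intro hdvd
        have := Nat.le_of_dvd (by omega) hdvd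
        omega
      have key : ((p - 1).choose (i + 1)) * (i + 1) = (p - 1).choose i * (p - 1 - i) :=
        Nat.choose_succ_right_eq _ _
      have key2 := congrArg (Nat.cast : ℕ → ZMod p) key
      push_cast at key2
      have hc : ((p - 1 - i : ℕ) : ZMod p) = -((i + 1 : ℕ) : ZMod p) := by
        have h2 : p - 1 - i = p - (i + 1) := by omega
        rw [h2, Nat.cast_sub (by omega), ZMod.natCast_self]
        push_cast
        ring
      rw [ih hi, hc] at key2
      have h3 : (((p - 1).choose (i + 1) : ℕ) : ZMod p) * ((i + 1 : ℕ) : ZMod p)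
          = (-1) ^ (i + 1) * ((i + 1 : ℕ) : ZMod p) := by
        push_cast
        push_cast at key2
        rw [key2]; ring
      have := mul_right_cancel₀ h1 h3
      exact_mod_cast this


lemma sum_pow_p_sub_three {p : ℕ} (hp : p.Prime) (hp5 : 5 ≤ p) :
    ∑ j ∈ range p, ((j : ZMod p)) ^ (p - 3) = 0 := by
  haveI := Fact.mk hp
  have h1 : ∑ j ∈ range p, ((j : ZMod p)) ^ (p - 3) = ∑ x : ZMod p, x ^ (p - 3) := by
    refine Finset.sum_nbij' (fun j => ((j : ZMod p))) (fun x => x.val)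
      (fun a _ => Finset.mem_univ _) (fun x _ => Finset.mem_range.mpr (ZMod.val_lt x))
      (fun a ha => ZMod.val_cast_of_lt (Finset.mem_range.mp ha))
      (fun x _ => ZMod.natCast_zmod_val x) (fun a _ => rfl)
  rw [h1]
  have hcard : Fintype.card (ZMod p) - 1 = p - 1 := by rw [ZMod.card]
  exact FiniteField.sum_pow_lt_card_sub_one (ZMod p) (p - 3) (by rw [ZMod.card]; omega)

lemma inv_sq_eq_pow {p : ℕ} (hp : p.Prime) (hp5 : 5 ≤ p) (x : ZMod p) :
    (x⁻¹) ^ 2 = x ^ (p - 3) := by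
  haveI := Fact.mk hp
  by_cases hx : x = 0
  · subst hx
    rw [inv_zero, zero_pow (by norm_num), zero_pow (by omega)]
  · have hx1 : x ^ (p - 1) = 1 := ZMod.pow_card_sub_one_eq_one hx
    have h2 : x ^ 2 * x ^ (p - 3) = 1 := by
      rw [← pow_add]
      have h3 : 2 + (p - 3) = p - 1 := by omega
      rw [h3, hx1]
    rw [inv_pow]
    exact inv_eq_of_mul_eq_one_right h2

lemma T0 {p : ℕ} (hp : p.Prime) (hp5 : 5 ≤ p) :
    ∑ j ∈ range (p - 1), ((((j + 1 : ℕ)) : ZMod p)⁻¹) ^ 2 = 0 := by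
  haveI := Fact.mk hp
  have h : ∑ j ∈ range ((p - 1) + 1), ((j : ZMod p)) ^ (p - 3) = 0 := by
    rw [show (p - 1) + 1 = p by omega]; exact sum_pow_p_sub_three hp hp5
  rw [Finset.sum_range_succ'] at h
  simp only [Nat.cast_zero, zero_pow (show p - 3 ≠ 0 by omega), add_zero] at h
  calc ∑ j ∈ range (p - 1), ((((j + 1 : ℕ)) : ZMod p)⁻¹) ^ 2
      = ∑ j ∈ range (p - 1), (((j + 1 : ℕ)) : ZMod p) ^ (p - 3) := by
        refine Finset.sum_congr rfl fun j _ => inv_sq_eq_pow hp hp5 _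
    _ = 0 := h

lemma H0 {p : ℕ} (hp : p.Prime) (hp5 : 5 ≤ p) :
    ∑ i ∈ range ((p - 1) / 2), ((((i + 1 : ℕ)) : ZMod p)⁻¹) ^ 2 = 0 := by
  haveI := Fact.mk hp
  have hodd : p % 2 = 1 := Nat.odd_iff.mp (hp.odd_of_ne_two (by omega))
  set m := (p - 1) / 2 with hmdef
  have hm : 2 * m = p - 1 := by omega
  have hT := T0 hp hp5
  rw [← hm, sum_range_two_mul] at hT
  have hpair : ∀ i ∈ range m,
      ((((i + 1 : ℕ)) : ZMod p)⁻¹) ^ 2 + ((((2 * m - 1 - i + 1 : ℕ)) : ZMod p)⁻¹) ^ 2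
        = 2 * ((((i + 1 : ℕ)) : ZMod p)⁻¹) ^ 2 := by
    intro i hi
    rw [Finset.mem_range] at hi
    have h1 : 2 * m - 1 - i + 1 = p - (i + 1) := by omega
    have h2 : ((p - (i + 1) : ℕ) : ZMod p) = -((i + 1 : ℕ) : ZMod p) := by
      rw [Nat.cast_sub (by omega), ZMod.natCast_self]
      ring
    rw [h1, h2, inv_neg, neg_sq]
    ring
  rw [Finset.sum_congr rfl hpair, ← Finset.mul_sum] at hT
  have h2ne : (2 : ZMod p) ≠ 0 := by
    have : ((2 : ℕ) : ZMod p) ≠ 0 := by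
      rw [Ne, ZMod.natCast_eq_zero_iff]
      intro hdvd
      have := Nat.le_of_dvd (by norm_num) hdvd
      omega
    exact_mod_cast this
  exact (mul_eq_zero.mp hT).resolve_left h2ne


lemma prod_add_eps {R : Type*} [CommRing R] (ε : R) (hε : ε * ε = 0) (s : Finset ℕ) (a : ℕ → R) :
    ∏ i ∈ s, (a i + ε) = ∏ i ∈ s, a i + ε * ∑ i ∈ s, ∏ j ∈ s.erase i, a j := by
  induction s using Finset.cons_induction with
  | empty => simp
  | cons i s his ih =>
      rw [Finset.prod_cons, ih, Finset.prod_cons, Finset.sum_cons, Finset.erase_cons]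
      have h2 : ∀ j ∈ s, ∏ x ∈ (Finset.cons i s his).erase j, a x
          = a i * ∏ x ∈ s.erase j, a x := by
        intro j hj
        have hij : i ≠ j := fun h => his (h ▸ hj)
        rw [Finset.cons_eq_insert, Finset.erase_insert_of_ne hij,
          Finset.prod_insert (fun h => his (Finset.mem_of_mem_erase h))]
      rw [Finset.sum_congr rfl h2, ← Finset.mul_sum]
      have : (a i + ε) * (∏ x ∈ s, a x + ε * ∑ x ∈ s, ∏ j ∈ s.erase x, a j)
          = a i * ∏ x ∈ s, a x
            + ε * (∏ x ∈ s, a x + a i * ∑ x ∈ s, ∏ j ∈ s.erase x, a j)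
            + (ε * ε) * (∑ x ∈ s, ∏ j ∈ s.erase x, a j) := by ring
      rw [this, hε, zero_mul, add_zero]

lemma p_cubed_cast_zero (p : ℕ) : ((p : ZMod (p ^ 3))) ^ 3 = 0 := by
  have h : ((p ^ 3 : ℕ) : ZMod (p ^ 3)) = 0 := ZMod.natCast_self _
  push_cast at h
  exact h

lemma ker_lemma {p : ℕ} (hp : p.Prime) (x : ZMod (p ^ 3))
    (hx : (ZMod.castHom (dvd_pow_self p (by norm_num : (3:ℕ) ≠ 0)) (ZMod p)) x = 0) :
    (p : ZMod (p ^ 3)) ^ 2 * x = 0 := by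
  haveI : NeZero (p ^ 3) := ⟨pow_ne_zero 3 hp.pos.ne'⟩
  have hvx : ((x.val : ℕ) : ZMod (p ^ 3)) = x := ZMod.natCast_zmod_val x
  have h1 : ((x.val : ℕ) : ZMod p) = 0 := by
    rw [← map_natCast (ZMod.castHom (dvd_pow_self p (by norm_num : (3:ℕ) ≠ 0)) (ZMod p)) x.val,
      hvx, hx]
  obtain ⟨w, hw⟩ := (ZMod.natCast_eq_zero_iff _ _).mp h1
  rw [← hvx, hw]
  have h2 : (p : ZMod (p ^ 3)) ^ 2 * ((p * w : ℕ) : ZMod (p ^ 3))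
      = ((p ^ 3 : ℕ) : ZMod (p ^ 3)) * (w : ZMod (p ^ 3)) := by
    push_cast
    ring
  rw [h2, ZMod.natCast_self, zero_mul]

lemma Q_key {p : ℕ} (hp : p.Prime) (hp5 : 5 ≤ p) (t : ℕ) :
    ((∏ j ∈ range (p - 1), (t * p + j + 1) : ℕ) : ZMod (p ^ 3))
      = (((p - 1).factorial : ℕ) : ZMod (p ^ 3)) := by
  haveI := Fact.mk hp
  have hodd : p % 2 = 1 := Nat.odd_iff.mp (hp.odd_of_ne_two (by omega))
  set m := (p - 1) / 2 with hmdef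
  have hm : 2 * m = p - 1 := by omega
  have hfact : (p - 1).factorial = ∏ j ∈ range (p - 1), (j + 1) :=
    (Finset.prod_range_add_one_eq_factorial _).symm
  rw [hfact]
  push_cast
  rw [← hm, prod_range_two_mul, prod_range_two_mul]
  set R := ZMod (p ^ 3)
  set ε : R := (p : R) ^ 2 * ((t : R) ^ 2 + (t : R)) with hεdef
  set A : ℕ → R := fun i => ((i : R) + 1) * ((p : R) - (i : R) - 1) with hAdef
  have hcast : ∀ i, i < m → ((2 * m - 1 - i : ℕ) : R) = (p : R) - 2 - (i : R) := by
    intro i hi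
    have h1 : 2 * m - 1 - i = p - (2 + i) := by omega
    rw [h1, Nat.cast_sub (by omega)]
    push_cast
    ring
  have hL : ∀ i ∈ range m,
      ((t : R) * (p : R) + (i : R) + 1) * ((t : R) * (p : R) + ((2 * m - 1 - i : ℕ) : R) + 1)
        = A i + ε := by
    intro i hi
    rw [Finset.mem_range] at hi
    rw [hcast i hi, hAdef, hεdef]
    ring
  have hR : ∀ i ∈ range m,
      (((i : R) + 1) * (((2 * m - 1 - i : ℕ) : R) + 1)) = A i := by
    intro i hi
    rw [Finset.mem_range] at hi
    rw [hcast i hi, hAdef]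
    ring
  calc (∏ i ∈ range m,
        (((t : R) * (p : R) + (i : R) + 1) * ((t : R) * (p : R) + ((2 * m - 1 - i : ℕ) : R) + 1)))
      = ∏ i ∈ range m, (A i + ε) := Finset.prod_congr rfl hL
    _ = ∏ i ∈ range m, A i + ε * ∑ i ∈ range m, ∏ j ∈ (range m).erase i, A j := by
        apply prod_add_eps
        have h3 := p_cubed_cast_zero p
        have : ε * ε = (p : R) ^ 3 * ((p : R) * ((t : R) ^ 2 + (t : R)) ^ 2) := by
          rw [hεdef]; ring
        rw [this, h3, zero_mul]
    _ = ∏ i ∈ range m, A i := by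
        have hker : ε * ∑ i ∈ range m, ∏ j ∈ (range m).erase i, A j = 0 := by
          have hrw : ε * ∑ i ∈ range m, ∏ j ∈ (range m).erase i, A j
              = (p : R) ^ 2 * (((t : R) ^ 2 + (t : R)) * ∑ i ∈ range m, ∏ j ∈ (range m).erase i, A j) := by
            rw [hεdef]; ring
          rw [hrw]
          apply ker_lemma hp
          set φ := ZMod.castHom (dvd_pow_self p (by norm_num : (3:ℕ) ≠ 0)) (ZMod p) with hφ
          rw [map_mul, map_sum]
          have hAφ : ∀ j, φ (A j) = -(((j : ZMod p) + 1)) ^ 2 := by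
            intro j
            rw [hAdef]
            simp only [map_mul, map_add, map_sub, map_natCast, map_one]
            rw [ZMod.natCast_self]
            ring
          have hsum : ∑ i ∈ range m, φ (∏ j ∈ (range m).erase i, A j) = 0 := by
            have hb : ∀ j, j ∈ range m → (((j : ZMod p) + 1)) ≠ 0 := by
              intro j hj
              rw [Finset.mem_range] at hj
              have : (((j + 1 : ℕ)) : ZMod p) ≠ 0 := by
                rw [Ne, ZMod.natCast_eq_zero_iff]
                intro hdvd
                have := Nat.le_of_dvd (by omega) hdvd
                omega
              push_cast at this
              exact this
            have hterm : ∀ i ∈ range m, φ (∏ j ∈ (range m).erase i, A j)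
                = (∏ j ∈ range m, (-(((j : ZMod p) + 1)) ^ 2)) * (-(((i : ZMod p) + 1)) ^ 2)⁻¹ := by
              intro i hi
              rw [map_prod]
              have h4 : ∏ j ∈ (range m).erase i, φ (A j)
                  = ∏ j ∈ (range m).erase i, (-(((j : ZMod p) + 1)) ^ 2) :=
                Finset.prod_congr rfl fun j _ => hAφ j
              rw [h4]
              have h5 := Finset.mul_prod_erase (range m) (fun j => (-(((j : ZMod p) + 1)) ^ 2)) hi
              have hine : (-(((i : ZMod p) + 1)) ^ 2) ≠ 0 := by
                rw [neg_ne_zero]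
                exact pow_ne_zero 2 (hb i hi)
              rw [← h5, mul_comm, ← mul_assoc, inv_mul_cancel₀ hine, one_mul]
            rw [Finset.sum_congr rfl hterm, ← Finset.mul_sum]
            have hsum2 : ∑ i ∈ range m, (-(((i : ZMod p) + 1)) ^ 2)⁻¹ = 0 := by
              have : ∀ i ∈ range m, (-(((i : ZMod p) + 1)) ^ 2)⁻¹
                  = -(((((i + 1 : ℕ)) : ZMod p)⁻¹) ^ 2) := by
                intro i _
                rw [inv_neg, inv_pow]
                push_cast
                ring_nf
              rw [Finset.sum_congr rfl this, Finset.sum_neg_distrib]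
              rw [H0 hp hp5, neg_zero]
            rw [hsum2, mul_zero]
          rw [hsum, mul_zero]
        rw [hker, add_zero]
    _ = ∏ i ∈ range m, (((i : R) + 1) * (((2 * m - 1 - i : ℕ) : R) + 1)) :=
        (Finset.prod_congr rfl hR).symm


def Pfun (p m : ℕ) : ℕ := ∏ k ∈ range m, (if p ∣ (k + 1) then 1 else (k + 1))

lemma fact_add (a b : ℕ) :
    (a + b).factorial = a.factorial * ∏ j ∈ range b, (a + j + 1) := by
  induction b with
  | zero => simp
  | succ b ih =>
      rw [Finset.prod_range_succ, show a + (b + 1) = (a + b) + 1 from rfl,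
        Nat.factorial_succ, ih]
      ring

lemma Pfun_step {p : ℕ} (hp : p.Prime) (m : ℕ) :
    Pfun p ((m + 1) * p) = Pfun p (m * p) * ∏ j ∈ range (p - 1), (m * p + j + 1) := by
  have h : (m + 1) * p = m * p + p := by ring
  rw [h, Pfun, Pfun, Finset.prod_range_add]
  congr 1
  have hp2 := hp.two_le
  have key : ∀ q, q + 1 = p →
      ∏ j ∈ range (q + 1), (if p ∣ (m * p + j + 1) then 1 else (m * p + j + 1))
        = ∏ j ∈ range q, (m * p + j + 1) := by
    intro q hq
    rw [Finset.prod_range_succ]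
    have hlast : p ∣ m * p + q + 1 := by
      refine ⟨m + 1, ?_⟩
      have h' : p * (m + 1) = m * p + p := by ring
      omega
    rw [if_pos hlast, mul_one]
    refine Finset.prod_congr rfl fun j hj => ?_
    rw [Finset.mem_range] at hj
    have hnd : ¬ p ∣ m * p + j + 1 := by
      intro hdvd
      have h1 : p ∣ j + 1 := by
        have h2 : m * p + j + 1 = p * m + (j + 1) := by ring
        rw [h2] at hdvd
        exact (Nat.dvd_add_right (Dvd.intro m rfl)).mp hdvd
      have := Nat.le_of_dvd (by omega) h1
      omega
    rw [if_neg hnd]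
  have := key (p - 1) (by omega)
  rw [show p - 1 + 1 = p by omega] at this
  exact this

lemma fact_eq {p : ℕ} (hp : p.Prime) (m : ℕ) :
    (m * p).factorial = p ^ m * m.factorial * Pfun p (m * p) := by
  induction m with
  | zero => simp [Pfun]
  | succ m ih =>
      have h1 : (m + 1) * p = m * p + p := by ring
      rw [h1, fact_add, ih]
      have h2 : ∏ j ∈ range p, (m * p + j + 1)
          = (∏ j ∈ range (p - 1), (m * p + j + 1)) * ((m + 1) * p) := by
        have hp2 := hp.two_le
        have key : ∀ q, q + 1 = p → ∏ j ∈ range (q + 1), (m * p + j + 1)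
            = (∏ j ∈ range q, (m * p + j + 1)) * ((m + 1) * p) := by
          intro q hq
          rw [Finset.prod_range_succ]
          congr 1
          have : (m + 1) * p = m * p + p := by ring
          omega
        have := key (p - 1) (by omega)
        rw [show p - 1 + 1 = p by omega] at this
        exact this
      rw [h2, ← h1, Pfun_step hp, Nat.factorial_succ]
      ring

lemma Pfun_cast {p : ℕ} (hp : p.Prime) (hp5 : 5 ≤ p) (m : ℕ) :
    ((Pfun p (m * p) : ℕ) : ZMod (p ^ 3)) = (((p - 1).factorial : ℕ) : ZMod (p ^ 3)) ^ m := by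
  induction m with
  | zero => simp [Pfun]
  | succ m ih =>
      rw [Pfun_step hp, Nat.cast_mul, ih, Q_key hp hp5 m]
      ring

lemma jacobsthal {p : ℕ} (hp : p.Prime) (hp5 : 5 ≤ p) (a b : ℕ) (hba : b ≤ a) :
    (((p * a).choose (p * b) : ℕ) : ZMod (p ^ 3)) = ((a.choose b : ℕ) : ZMod (p ^ 3)) := by
  haveI := Fact.mk hp
  set c := a - b with hcdef
  have hac : a = b + c := by omega
  have h1 : (a * p).factorial = p ^ a * a.factorial * Pfun p (a * p) := fact_eq hp a
  have h2 : (a * p).factorial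
      = (a * p).choose (b * p) * ((b * p).factorial * (c * p).factorial) := by
    have hble : b * p ≤ a * p := Nat.mul_le_mul_right _ hba
    have := Nat.choose_mul_factorial_mul_factorial hble
    have hsub : a * p - b * p = c * p := by
      rw [hcdef]; rw [Nat.sub_mul]
    rw [← this, hsub]
    ring
  rw [fact_eq hp b, fact_eq hp c] at h2
  have h3 : p ^ a * (a.factorial * Pfun p (a * p))
      = p ^ a * ((a * p).choose (b * p) * (b.factorial * Pfun p (b * p)
          * (c.factorial * Pfun p (c * p)))) := by
    calc p ^ a * (a.factorial * Pfun p (a * p))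
        = p ^ a * a.factorial * Pfun p (a * p) := by ring
      _ = (a * p).choose (b * p) * (p ^ b * b.factorial * Pfun p (b * p)
            * (p ^ c * c.factorial * Pfun p (c * p))) := by rw [← h1, h2]
      _ = p ^ (b + c) * ((a * p).choose (b * p) * (b.factorial * Pfun p (b * p)
            * (c.factorial * Pfun p (c * p)))) := by rw [pow_add]; ring
      _ = _ := by rw [← hac]
  have h4 := Nat.eq_of_mul_eq_mul_left (show 0 < p ^ a from pow_pos hp.pos a) h3
  have h5 : a.factorial = a.choose b * b.factorial * c.factorial := by
    rw [hcdef, ← Nat.choose_mul_factorial_mul_factorial hba]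
  rw [h5] at h4
  have h6 : (b.factorial * c.factorial) * (a.choose b * Pfun p (a * p))
      = (b.factorial * c.factorial) * ((a * p).choose (b * p) * (Pfun p (b * p) * Pfun p (c * p))) := by
    calc (b.factorial * c.factorial) * (a.choose b * Pfun p (a * p))
        = a.choose b * b.factorial * c.factorial * Pfun p (a * p) := by ring
      _ = (a * p).choose (b * p) * (b.factorial * Pfun p (b * p)
            * (c.factorial * Pfun p (c * p))) := h4
      _ = _ := by ring
  have h7 := Nat.eq_of_mul_eq_mul_left
    (show 0 < b.factorial * c.factorial from Nat.mul_pos b.factorial_pos c.factorial_pos) h6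
  -- cast to ZMod (p^3)
  have h8 := congrArg (Nat.cast : ℕ → ZMod (p ^ 3)) h7
  push_cast at h8
  rw [Pfun_cast hp hp5 a, Pfun_cast hp hp5 b, Pfun_cast hp hp5 c] at h8
  set W := (((p - 1).factorial : ℕ) : ZMod (p ^ 3)) with hWdef
  have hWu : IsUnit W := by
    rw [hWdef, ZMod.isUnit_iff_coprime]
    apply Nat.Coprime.pow_right
    rw [Nat.coprime_comm]
    rw [Nat.Prime.coprime_iff_not_dvd hp]
    intro hdvd
    have := (Nat.Prime.dvd_factorial hp).mp hdvd
    omega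
  have h9 : ((a.choose b : ℕ) : ZMod (p ^ 3)) * W ^ a
      = (((a * p).choose (b * p) : ℕ) : ZMod (p ^ 3)) * W ^ a := by
    rw [h8, hac, pow_add]
    try ring
  have h10 := IsUnit.mul_right_cancel (hWu.pow a) h9
  rw [mul_comm a p, mul_comm b p] at h10
  exact h10.symm


lemma lucas_cast {p : ℕ} (hp : p.Prime) (N K : ℕ) :
    ((N.choose K : ℕ) : ZMod p)
      = (((N % p).choose (K % p) : ℕ) : ZMod p) * (((N / p).choose (K / p) : ℕ) : ZMod p) := by
  haveI := Fact.mk hp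
  have h := (ZMod.natCast_eq_natCast_iff _ _ _).mpr
    (Choose.choose_modEq_choose_mod_mul_choose_div_nat (p := p) (n := N) (k := K))
  rw [h]
  push_cast
  ring

lemma nonmult_sum {p : ℕ} (hp : p.Prime) (hp5 : 5 ≤ p) {n : ℕ} (hn : 1 ≤ n)
    {t : ℕ} (ht : t < n) :
    ∑ j ∈ range (p - 1),
      ((((p * n).choose (t * p + j + 1) : ℕ) : ZMod (p ^ 3)) ^ 2
        * (((p * n + (t * p + j + 1)).choose (t * p + j + 1) : ℕ) : ZMod (p ^ 3)) ^ 2) = 0 := by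
  haveI := Fact.mk hp
  have hpn1 : 1 ≤ p * n := Nat.mul_pos hp.pos hn
  have hknd : ∀ j, j < p - 1 → ¬ p ∣ (t * p + j + 1) := by
    intro j hj hdvd
    have h1 : p ∣ j + 1 := by
      have h2 : t * p + j + 1 = p * t + (j + 1) := by ring
      rw [h2] at hdvd
      exact (Nat.dvd_add_right (Dvd.intro t rfl)).mp hdvd
    have := Nat.le_of_dvd (by omega) h1
    omega
  have hstep : ∀ j ∈ range (p - 1),
      (((p * n).choose (t * p + j + 1) : ℕ) : ZMod (p ^ 3)) ^ 2
        * (((p * n + (t * p + j + 1)).choose (t * p + j + 1) : ℕ) : ZMod (p ^ 3)) ^ 2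
      = (p : ZMod (p ^ 3)) ^ 2
        * ((n : ZMod (p ^ 3)) ^ 2 * (((p * n - 1).choose (t * p + j) : ℕ) : ZMod (p ^ 3)) ^ 2
          * (((p * n + (t * p + j + 1)).choose (t * p + j + 1) : ℕ) : ZMod (p ^ 3)) ^ 2
          * ((((t * p + j + 1 : ℕ)) : ZMod (p ^ 3))⁻¹) ^ 2) := by
    intro j hj
    rw [Finset.mem_range] at hj
    have hu : IsUnit (((t * p + j + 1 : ℕ)) : ZMod (p ^ 3)) := by
      rw [ZMod.isUnit_iff_coprime]
      exact Nat.Coprime.pow_right 3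
        (Nat.coprime_comm.mp ((Nat.Prime.coprime_iff_not_dvd hp).mpr (hknd j hj)))
    have hinv : (((t * p + j + 1 : ℕ)) : ZMod (p ^ 3))
        * (((t * p + j + 1 : ℕ)) : ZMod (p ^ 3))⁻¹ = 1 := ZMod.mul_inv_of_unit _ hu
    have hNat : (p * n) * ((p * n - 1).choose (t * p + j))
        = (p * n).choose (t * p + j + 1) * (t * p + j + 1) := by
      have h1 := Nat.add_one_mul_choose_eq (p * n - 1) (t * p + j)
      rw [(show p * n - 1 + 1 = p * n by omega)] at h1
      exact h1
    have hcast := congrArg (Nat.cast : ℕ → ZMod (p ^ 3)) hNat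
    rw [Nat.cast_mul, Nat.cast_mul, Nat.cast_mul] at hcast
    have hCk : (((p * n).choose (t * p + j + 1) : ℕ) : ZMod (p ^ 3))
        = (((t * p + j + 1 : ℕ)) : ZMod (p ^ 3))⁻¹
          * ((p : ZMod (p ^ 3)) * (n : ZMod (p ^ 3)))
          * (((p * n - 1).choose (t * p + j) : ℕ) : ZMod (p ^ 3)) := by
      calc (((p * n).choose (t * p + j + 1) : ℕ) : ZMod (p ^ 3))
          = (((p * n).choose (t * p + j + 1) : ℕ) : ZMod (p ^ 3))
            * ((((t * p + j + 1 : ℕ)) : ZMod (p ^ 3))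
              * (((t * p + j + 1 : ℕ)) : ZMod (p ^ 3))⁻¹) := by rw [hinv, mul_one]
        _ = ((((p * n).choose (t * p + j + 1) : ℕ) : ZMod (p ^ 3))
              * (((t * p + j + 1 : ℕ)) : ZMod (p ^ 3)))
              * (((t * p + j + 1 : ℕ)) : ZMod (p ^ 3))⁻¹ := by ring
        _ = ((p : ZMod (p ^ 3)) * (n : ZMod (p ^ 3))
              * (((p * n - 1).choose (t * p + j) : ℕ) : ZMod (p ^ 3)))
              * (((t * p + j + 1 : ℕ)) : ZMod (p ^ 3))⁻¹ := by rw [← hcast]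
        _ = _ := by ring
    rw [hCk]
    ring
  rw [Finset.sum_congr rfl hstep, ← Finset.mul_sum]
  apply ker_lemma hp
  rw [map_sum]
  set φ := ZMod.castHom (dvd_pow_self p (by norm_num : (3:ℕ) ≠ 0)) (ZMod p) with hφdef
  have hphi : ∀ j ∈ range (p - 1),
      φ ((n : ZMod (p ^ 3)) ^ 2 * (((p * n - 1).choose (t * p + j) : ℕ) : ZMod (p ^ 3)) ^ 2
          * (((p * n + (t * p + j + 1)).choose (t * p + j + 1) : ℕ) : ZMod (p ^ 3)) ^ 2
          * ((((t * p + j + 1 : ℕ)) : ZMod (p ^ 3))⁻¹) ^ 2)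
      = ((n : ZMod p) ^ 2 * (((n - 1).choose t : ℕ) : ZMod p) ^ 2
          * (((n + t).choose t : ℕ) : ZMod p) ^ 2)
        * ((((j + 1 : ℕ)) : ZMod p)⁻¹) ^ 2 := by
    intro j hj
    rw [Finset.mem_range] at hj
    rw [map_mul, map_mul, map_mul, map_pow, map_pow, map_pow, map_pow,
      map_natCast, map_natCast, map_natCast]
    -- Lucas computations
    have hrepn : p * n - 1 = (p - 1) + p * (n - 1) := by
      have e1 : p * ((n - 1) + 1) = p * (n - 1) + p := Nat.mul_succ p (n - 1)
      have e2 : (n - 1) + 1 = n := by omega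
      rw [e2] at e1
      omega
    have hC1 : (((p * n - 1).choose (t * p + j) : ℕ) : ZMod p)
        = (((p - 1).choose j : ℕ) : ZMod p) * (((n - 1).choose t : ℕ) : ZMod p) := by
      have hL := lucas_cast hp (p * n - 1) (t * p + j)
      have hk : t * p + j = j + p * t := by ring
      rw [hrepn, hk, Nat.add_mul_mod_self_left, Nat.add_mul_mod_self_left,
        Nat.add_mul_div_left _ _ hp.pos, Nat.add_mul_div_left _ _ hp.pos,
        Nat.mod_eq_of_lt (show p - 1 < p by omega), Nat.mod_eq_of_lt (show j < p by omega),
        Nat.div_eq_of_lt (show p - 1 < p by omega), Nat.div_eq_of_lt (show j < p by omega),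
        zero_add, zero_add] at hL
      rw [hrepn, hk, hL]
    have hC2 : (((p * n + (t * p + j + 1)).choose (t * p + j + 1) : ℕ) : ZMod p)
        = (((n + t).choose t : ℕ) : ZMod p) := by
      have hL := lucas_cast hp (p * n + (t * p + j + 1)) (t * p + j + 1)
      have hN : p * n + (t * p + j + 1) = (j + 1) + p * (n + t) := by ring
      have hk : t * p + j + 1 = (j + 1) + p * t := by ring
      rw [hN, hk, Nat.add_mul_mod_self_left, Nat.add_mul_mod_self_left,
        Nat.add_mul_div_left _ _ hp.pos, Nat.add_mul_div_left _ _ hp.pos,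
        Nat.mod_eq_of_lt (show j + 1 < p by omega),
        Nat.div_eq_of_lt (show j + 1 < p by omega),
        Nat.choose_self, zero_add, zero_add, Nat.cast_one, one_mul] at hL
      rw [hN, hk, hL]
    have hinvφ : φ ((((t * p + j + 1 : ℕ)) : ZMod (p ^ 3))⁻¹) = (((j + 1 : ℕ)) : ZMod p)⁻¹ := by
      have hu : IsUnit (((t * p + j + 1 : ℕ)) : ZMod (p ^ 3)) := by
        rw [ZMod.isUnit_iff_coprime]
        exact Nat.Coprime.pow_right 3
          (Nat.coprime_comm.mp ((Nat.Prime.coprime_iff_not_dvd hp).mpr (hknd j hj)))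
      have hinv : (((t * p + j + 1 : ℕ)) : ZMod (p ^ 3))
          * (((t * p + j + 1 : ℕ)) : ZMod (p ^ 3))⁻¹ = 1 := ZMod.mul_inv_of_unit _ hu
      have h1 : φ ((((t * p + j + 1 : ℕ)) : ZMod (p ^ 3)))
          * φ ((((t * p + j + 1 : ℕ)) : ZMod (p ^ 3))⁻¹) = 1 := by
        rw [← map_mul, hinv, map_one]
      have h2 : φ ((((t * p + j + 1 : ℕ)) : ZMod (p ^ 3))) = (((j + 1 : ℕ)) : ZMod p) := by
        rw [map_natCast]
        push_cast
        rw [ZMod.natCast_self]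
        ring
      rw [h2] at h1
      exact eq_inv_of_mul_eq_one_right h1
    rw [hC1, hC2, hinvφ]
    have hCp1 : (((p - 1).choose j : ℕ) : ZMod p) ^ 2 = 1 := by
      rw [cast_choose_p_sub_one hp j (by omega), ← pow_mul, mul_comm j 2, pow_mul]
      norm_num
    rw [mul_pow, hCp1]
    ring
  rw [Finset.sum_congr rfl hphi, ← Finset.mul_sum, T0 hp hp5, mul_zero]

lemma main_cast {p n : ℕ} (hp : p.Prime) (hp5 : 5 ≤ p) (hn : 1 ≤ n) :
    ∑ k ∈ range (p * n + 1), ((((p * n).choose k : ℕ) : ZMod (p ^ 3)) ^ 2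
      * (((p * n + k).choose k : ℕ) : ZMod (p ^ 3)) ^ 2)
    = ∑ k ∈ range (n + 1), (((n.choose k : ℕ) : ZMod (p ^ 3)) ^ 2
      * (((n + k).choose k : ℕ) : ZMod (p ^ 3)) ^ 2) := by
  haveI := Fact.mk hp
  set F : ℕ → ZMod (p ^ 3) := fun k => (((p * n).choose k : ℕ) : ZMod (p ^ 3)) ^ 2
      * (((p * n + k).choose k : ℕ) : ZMod (p ^ 3)) ^ 2 with hF
  rw [Finset.sum_range_succ]
  have hr : ∑ k ∈ range (p * n), F k = ∑ t ∈ range n, ∑ j ∈ range p, F (t * p + j) := by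
    have h := sum_range_mul F n p
    rw [show n * p = p * n by ring] at h
    exact h
  rw [hr]
  have hinner : ∀ t ∈ range n, ∑ j ∈ range p, F (t * p + j)
      = (∑ j ∈ range (p - 1), F (t * p + j + 1)) + F (t * p) := by
    intro t _
    have key : ∀ q, q + 1 = p → ∑ j ∈ range (q + 1), F (t * p + j)
        = (∑ j ∈ range q, F (t * p + j + 1)) + F (t * p) := by
      intro q hq
      rw [Finset.sum_range_succ']
      simp only [← add_assoc, add_zero]
    have h := key (p - 1) (by omega)
    rw [show p - 1 + 1 = p by omega] at h
    exact h
  rw [Finset.sum_congr rfl hinner]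
  have hz : ∀ t ∈ range n, (∑ j ∈ range (p - 1), F (t * p + j + 1)) + F (t * p) = F (t * p) := by
    intro t ht'
    rw [Finset.mem_range] at ht'
    have h0 : ∑ j ∈ range (p - 1), F (t * p + j + 1) = 0 := by
      simp only [hF]
      exact nonmult_sum hp hp5 hn ht'
    rw [h0, zero_add]
  rw [Finset.sum_congr rfl hz]
  rw [Finset.sum_range_succ]
  have hsum : ∑ t ∈ range n, F (t * p)
      = ∑ t ∈ range n, (((n.choose t : ℕ) : ZMod (p ^ 3)) ^ 2
          * (((n + t).choose t : ℕ) : ZMod (p ^ 3)) ^ 2) := by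
    refine Finset.sum_congr rfl fun t ht' => ?_
    rw [Finset.mem_range] at ht'
    simp only [hF]
    rw [mul_comm t p, ← Nat.mul_add, jacobsthal hp hp5 n t (by omega),
      jacobsthal hp hp5 (n + t) t (by omega)]
  have hlast : ((((p * n).choose (p * n) : ℕ)) : ZMod (p ^ 3)) ^ 2
      * ((((p * n + p * n).choose (p * n) : ℕ)) : ZMod (p ^ 3)) ^ 2
      = (((n.choose n : ℕ) : ZMod (p ^ 3)) ^ 2
      * (((n + n).choose n : ℕ) : ZMod (p ^ 3)) ^ 2) := by
    rw [show p * n + p * n = p * (n + n) by ring, jacobsthal hp hp5 n n le_rfl,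
      jacobsthal hp hp5 (n + n) n (by omega)]
  rw [hsum, hlast]

end AperyAux

theorem apery_mul_p_mod_p_cubed (p : ℕ) (hp : p.Prime) (hp5 : 5 ≤ p) (n : ℕ) :
    apery (p * n) ≡ apery n [MOD p ^ 3] := by
  rcases Nat.eq_zero_or_pos n with hn | hn
  · rw [hn, mul_zero]
  · haveI := Fact.mk hp
    apply (ZMod.natCast_eq_natCast_iff _ _ _).mp
    unfold apery
    push_cast
    exact AperyAux.main_cast hp hp5 hn
end

section
/- For every prime p and every d ∈ {0, 1, ..., p−1}, A(d) ≡ A(p − 1 − d) (mod p), where A denotes the Apéry numbers. -/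
open Finset Nat

lemma desc_cast (p d : ℕ) (hp : p.Prime) (hd : d ≤ p - 1) :
    ∀ k, k ≤ p - 1 - d → ((p - 1 - d).descFactorial k : ZMod p)
      = (-1) ^ k * ((d + k).descFactorial k : ZMod p) := by
  have hp2 := hp.two_le
  intro k
  induction k with
  | zero => simp
  | succ k ih =>
    intro hk
    have hk' : k ≤ p - 1 - d := by omega
    have e1 : (p - 1 - d).descFactorial (k + 1)
        = (p - 1 - d - k) * (p - 1 - d).descFactorial k := Nat.descFactorial_succ _ _
    have e2 : (d + (k + 1)).descFactorial (k + 1)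
        = (d + k + 1) * (d + k).descFactorial k :=
      Nat.succ_descFactorial_succ (d + k) k
    have h1 : p - 1 - d - k = p - (d + k + 1) := by omega
    have h2 : d + k + 1 ≤ p := by omega
    have hc : ((p - 1 - d - k : ℕ) : ZMod p) = -((d + k + 1 : ℕ) : ZMod p) := by
      rw [h1, Nat.cast_sub h2, ZMod.natCast_self, zero_sub]
    rw [e1, e2, Nat.cast_mul, Nat.cast_mul, hc, ih hk', pow_succ]
    push_cast
    ring

lemma choose_sq_cast (p d : ℕ) (hp : p.Prime) (hd : d ≤ p - 1) (k : ℕ) (hk : k ≤ p - 1) :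
    (((p - 1 - d).choose k : ZMod p)) ^ 2 = (((d + k).choose k : ZMod p)) ^ 2 := by
  have hp2 := hp.two_le
  haveI := Fact.mk hp
  have hkp : k < p := by omega
  have hfacdvd : ¬ (p ∣ Nat.factorial k) := fun h => absurd ((Nat.Prime.dvd_factorial hp).mp h) (by omega)
  have hfac : ((k ! : ℕ) : ZMod p) ≠ 0 := by
    rw [Ne, ZMod.natCast_eq_zero_iff]; exact hfacdvd
  rcases le_or_gt k (p - 1 - d) with h | h
  · have key := desc_cast p d hp hd k h
    have key2 : ((k ! : ℕ) : ZMod p) * ((p - 1 - d).choose k : ZMod p)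
        = (-1) ^ k * (((k ! : ℕ) : ZMod p) * ((d + k).choose k : ZMod p)) := by
      rw [Nat.descFactorial_eq_factorial_mul_choose, Nat.descFactorial_eq_factorial_mul_choose]
        at key
      push_cast at key
      exact key
    have hone : (((-1 : ZMod p)) ^ k) ^ 2 = 1 := by
      rw [← pow_mul, mul_comm, pow_mul, neg_one_sq, one_pow]
    have sq : ((k ! : ℕ) : ZMod p) ^ 2 * ((p - 1 - d).choose k : ZMod p) ^ 2
        = ((k ! : ℕ) : ZMod p) ^ 2 * ((d + k).choose k : ZMod p) ^ 2 := by
      have h2 := congrArg (· ^ 2) key2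
      simp only [mul_pow] at h2
      rw [hone, one_mul] at h2
      exact h2
    exact mul_left_cancel₀ (pow_ne_zero 2 hfac) sq
  · have hc1 : (p - 1 - d).choose k = 0 := Nat.choose_eq_zero_of_lt (by omega)
    have hdvd : p ∣ (d + k).descFactorial k := by
      rw [Nat.descFactorial_eq_prod_range]
      have hmem : d + k - p ∈ range k := mem_range.mpr (by omega)
      have heq : d + k - (d + k - p) = p := by omega
      have hh := Finset.dvd_prod_of_mem (fun i => d + k - i) hmem
      beta_reduce at hh
      rwa [heq] at hh
    have hc2 : p ∣ (d + k).choose k := by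
      have h3 : p ∣ k ! * (d + k).choose k := by
        rw [← Nat.descFactorial_eq_factorial_mul_choose]; exact hdvd
      exact (hp.dvd_mul.mp h3).resolve_left hfacdvd
    rw [hc1, (ZMod.natCast_eq_zero_iff _ _).mpr hc2]
    simp

theorem apery_reflection_mod_p (p : ℕ) (hp : p.Prime) (d : ℕ) (hd : d ≤ p - 1) :
    apery d ≡ apery (p - 1 - d) [MOD p] := by
  have hp2 := hp.two_le
  have hle : p - 1 - d ≤ p - 1 := by omega
  have hde : p - 1 - (p - 1 - d) = d := by omega
  rw [← ZMod.natCast_eq_natCast_iff]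
  have key : ∀ n, n ≤ p - 1 →
      ((apery n : ℕ) : ZMod p)
        = ∑ k ∈ range p, ((n.choose k : ZMod p)) ^ 2 * (((p - 1 - n).choose k : ZMod p)) ^ 2 := by
    intro n hn
    unfold apery
    push_cast
    rw [Finset.sum_subset (Finset.range_subset_range.mpr (show n + 1 ≤ p by omega))]
    · exact Finset.sum_congr rfl fun k hk => by
        rw [← choose_sq_cast p n hp hn k (by have := mem_range.mp hk; omega)]
    · intro k _ hk
      rw [Nat.choose_eq_zero_of_lt (by simp only [mem_range, not_lt] at hk; omega)]
      push_cast; ring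
  rw [key d hd, key _ hle, hde]
  exact Finset.sum_congr rfl fun k _ => by ring
end

section
/- For every prime p ≥ 5 and all natural numbers a ≥ b, Jacobsthal's congruence holds: C(p·a, p·b) ≡ C(a, b) (mod p^3). -/
open Finset

-- bridge: sum over ZMod n vs sum over range n
lemma sum_zmod_eq_sum_range {M : Type*} [AddCommMonoid M] (n : ℕ) [NeZero n]
    (f : ZMod n → M) : ∑ x : ZMod n, f x = ∑ k ∈ Finset.range n, f k := by
  refine Finset.sum_nbij' (fun x => x.val) (fun k => (k : ZMod n)) ?_ ?_ ?_ ?_ ?_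
  · intro x _; exact Finset.mem_range.mpr (ZMod.val_lt x)
  · intro k _; exact Finset.mem_univ _
  · intro x _; exact ZMod.natCast_rightInverse x
  · intro k hk; exact ZMod.val_cast_of_lt (Finset.mem_range.mp hk)
  · intro x _; rw [ZMod.natCast_rightInverse x]

-- sum of inverse squares over ZMod p is 0 for p ≥ 5
lemma sum_inv_sq (p : ℕ) [Fact p.Prime] (hp5 : 5 ≤ p) :
    ∑ x : ZMod p, (x⁻¹) ^ 2 = 0 := by
  have h1 : ∑ x : ZMod p, (x⁻¹) ^ 2 = ∑ x : ZMod p, x ^ 2 := by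
    refine Fintype.sum_equiv (Equiv.inv (ZMod p)) _ _ (fun x => ?_)
    simp
  rw [h1]
  have := FiniteField.sum_pow_lt_card_sub_one (K := ZMod p) 2 ?_
  · exact this
  · rw [ZMod.card]; omega

lemma half_sum_inv_sq (p m : ℕ) [Fact p.Prime] (hp5 : 5 ≤ p) (hm : p = 2 * m + 1) :
    ∑ k ∈ Finset.range m, (((k+1 : ℕ) : ZMod p)⁻¹) ^ 2 = 0 := by
  have hfull : ∑ k ∈ Finset.range p, (((k : ℕ) : ZMod p)⁻¹) ^ 2 = 0 := by
    rw [← sum_zmod_eq_sum_range p (fun x => (x⁻¹) ^ 2)]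
    exact sum_inv_sq p hp5
  have hr : Finset.range p = Finset.range ((m + m) + 1) := by rw [hm]; congr 1; omega
  rw [hr, Finset.sum_range_succ'] at hfull
  simp only [Nat.cast_zero, inv_zero, ne_eq, zero_pow, add_zero] at hfull
  rw [Finset.sum_range_add] at hfull
  have hrefl : ∑ k ∈ Finset.range m, (((m + k + 1 : ℕ) : ZMod p)⁻¹) ^ 2
      = ∑ k ∈ Finset.range m, (((k + 1 : ℕ) : ZMod p)⁻¹) ^ 2 := by
    rw [← Finset.sum_range_reflect (fun j => (((j + 1 : ℕ) : ZMod p)⁻¹) ^ 2) m]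
    refine Finset.sum_congr rfl (fun k hk => ?_)
    have hk' := Finset.mem_range.mp hk
    have hcast : ((m + k + 1 : ℕ) : ZMod p) = -(((m - 1 - k) + 1 : ℕ) : ZMod p) := by
      have hsum : (m + k + 1) + ((m - 1 - k) + 1) = p := by omega
      have : ((m + k + 1 : ℕ) : ZMod p) + (((m - 1 - k) + 1 : ℕ) : ZMod p) = 0 := by
        rw [← Nat.cast_add, hsum, ZMod.natCast_self]
      exact eq_neg_of_add_eq_zero_left this
    rw [hcast, inv_neg]
    ring
  rw [hrefl] at hfull
  have h2 : (2 : ZMod p) ≠ 0 := by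
    have hnd : ¬ (p ∣ 2) := fun h => absurd (Nat.le_of_dvd two_pos h) (by omega)
    intro h
    exact hnd ((ZMod.natCast_eq_zero_iff 2 p).mp (by exact_mod_cast h))
  have key : (2 : ZMod p) * ∑ k ∈ Finset.range m, (((k+1 : ℕ) : ZMod p)⁻¹) ^ 2 = 0 := by
    rw [two_mul]
    simpa using hfull
  rcases mul_eq_zero.mp key with h | h
  · exact absurd h h2
  · exact h

lemma lemA (p m : ℕ) [Fact p.Prime] (hp5 : 5 ≤ p) (hm : p = 2 * m + 1) :
    ((∑ k ∈ Finset.range m, ∏ l ∈ (Finset.range m).erase k,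
      ((l+1)*(p-(l+1))) : ℕ) : ZMod p) = 0 := by
  rw [Nat.cast_sum]
  simp only [Nat.cast_prod]
  have hcast : ∀ l < m, (((l+1)*(p-(l+1)) : ℕ) : ZMod p) = -(((l+1 : ℕ) : ZMod p))^2 := by
    intro l hl
    have h1 : ((p - (l+1) : ℕ) : ZMod p) = -((l+1 : ℕ) : ZMod p) := by
      have hs : (l+1) + (p - (l+1)) = p := by omega
      have : ((l+1 : ℕ) : ZMod p) + ((p - (l+1) : ℕ) : ZMod p) = 0 := by
        rw [← Nat.cast_add, hs, ZMod.natCast_self]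
      exact eq_neg_of_add_eq_zero_right this
    rw [Nat.cast_mul, h1]; ring
  have hunit : ∀ l < m, (((l+1 : ℕ) : ZMod p)) ≠ 0 := by
    intro l hl h
    have := (ZMod.natCast_eq_zero_iff (l+1) p).mp h
    have := Nat.le_of_dvd (Nat.succ_pos l) this
    omega
  calc ∑ k ∈ Finset.range m, ∏ l ∈ (Finset.range m).erase k, (((l+1)*(p-(l+1)) : ℕ) : ZMod p)
      = ∑ k ∈ Finset.range m, (∏ l ∈ Finset.range m, (-(((l+1:ℕ) : ZMod p))^2))
          * (-(((k+1:ℕ) : ZMod p))^2)⁻¹ := by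
        refine Finset.sum_congr rfl (fun k hk => ?_)
        have hk' := Finset.mem_range.mp hk
        rw [Finset.prod_congr rfl (fun l hl => hcast l
          (Finset.mem_range.mp (Finset.mem_of_mem_erase hl)))]
        have hne : (-(((k+1:ℕ) : ZMod p))^2) ≠ 0 := by
          simp only [ne_eq, neg_eq_zero, pow_eq_zero_iff two_ne_zero]
          exact hunit k hk'
        rw [eq_mul_inv_iff_mul_eq₀ hne]
        exact Finset.prod_erase_mul _ _ hk
    _ = (∏ l ∈ Finset.range m, (-(((l+1:ℕ) : ZMod p))^2)) *
          ∑ k ∈ Finset.range m, (-(((k+1:ℕ) : ZMod p))^2)⁻¹ := by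
        rw [Finset.mul_sum]
    _ = 0 := by
        have : ∑ k ∈ Finset.range m, (-(((k+1:ℕ) : ZMod p))^2)⁻¹
            = -∑ k ∈ Finset.range m, (((k+1:ℕ) : ZMod p)⁻¹)^2 := by
          rw [← Finset.sum_neg_distrib]
          exact Finset.sum_congr rfl (fun k hk => by rw [inv_neg, inv_pow])
        rw [this, half_sum_inv_sq p m hp5 hm]
        simp

lemma prod_add_nilp {R : Type*} [CommRing R] {ι : Type*} [DecidableEq ι]
    (c : R) (hc : c * c = 0) (s : Finset ι) (f : ι → R) :
    ∏ i ∈ s, (f i + c) = ∏ i ∈ s, f i + c * ∑ i ∈ s, ∏ l ∈ s.erase i, f l := by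
  induction s using Finset.induction_on with
  | empty => simp
  | @insert a s ha ih =>
    rw [Finset.prod_insert ha, ih, Finset.prod_insert ha]
    have hsum : ∑ i ∈ insert a s, ∏ l ∈ (insert a s).erase i, f l
        = ∏ l ∈ s, f l + f a * ∑ i ∈ s, ∏ l ∈ s.erase i, f l := by
      rw [Finset.sum_insert ha, Finset.erase_insert ha, Finset.mul_sum]
      congr 1
      refine Finset.sum_congr rfl (fun i hi => ?_)
      rw [Finset.erase_insert_of_ne (by rintro rfl; exact ha hi),
        Finset.prod_insert (fun h => ha (Finset.mem_of_mem_erase h))]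
    rw [hsum]
    linear_combination (∑ i ∈ s, ∏ l ∈ s.erase i, f l) * hc

lemma pair_prod {M : Type*} [CommMonoid M] (g : ℕ → M) (m : ℕ) :
    ∏ k ∈ Finset.range (2*m), g k = ∏ k ∈ Finset.range m, (g k * g (2*m-1-k)) := by
  rw [show 2*m = m+m from by ring, Finset.prod_range_add,
    ← Finset.prod_range_reflect (fun j => g (m+j)) m, ← Finset.prod_mul_distrib]
  refine Finset.prod_congr rfl (fun k hk => ?_)
  have hk' := Finset.mem_range.mp hk
  congr 2
  omega

lemma lemB (p m j : ℕ) [Fact p.Prime] (hp5 : 5 ≤ p) (hm : p = 2 * m + 1) :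
    ((∏ k ∈ Finset.range (p-1), (p*j + k + 1) : ℕ) : ZMod (p^3))
      = (Nat.factorial (p-1) : ZMod (p^3)) := by
  have hp1 : p - 1 = 2 * m := by omega
  -- pairing in ℕ
  have hpairN : ∏ k ∈ Finset.range (p-1), (p*j + k + 1)
      = ∏ k ∈ Finset.range m, (p^2*(j^2+j) + (k+1)*(p-(k+1))) := by
    rw [hp1, pair_prod (fun k => p*j + k + 1) m]
    refine Finset.prod_congr rfl (fun k hk => ?_)
    have hk' := Finset.mem_range.mp hk
    rw [show p*j + (2*m-1-k) + 1 = p*j + (p - (k+1)) from by omega,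
      show p*j + k + 1 = p*j + (k+1) from by omega]
    obtain ⟨v, hv⟩ : ∃ v, (k+1) + v = p := ⟨p - (k+1), by omega⟩
    rw [show p - (k+1) = v from by omega]
    subst hv
    ring
  have hfactN : Nat.factorial (p-1) = ∏ k ∈ Finset.range m, ((k+1)*(p-(k+1))) := by
    rw [← Finset.prod_range_add_one_eq_factorial, hp1, pair_prod (fun k => k + 1) m]
    refine Finset.prod_congr rfl (fun k hk => ?_)
    have hk' := Finset.mem_range.mp hk
    congr 1
    omega
  rw [hpairN, hfactN]
  push_cast
  set R := ZMod (p^3)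
  set c : R := ((p:R))^2*((j:R)^2+(j:R)) with hc_def
  have hp3 : ((p:R))^3 = 0 := by
    have := ZMod.natCast_self (p^3)
    push_cast at this
    exact this
  have hcc : c * c = 0 := by
    rw [hc_def]
    have : ((p:R))^2 * ((p:R))^2 = 0 := by
      have : ((p:R))^2 * ((p:R))^2 = ((p:R))^3 * (p:R) := by ring
      rw [this, hp3, zero_mul]
    linear_combination (((j:R)^2+(j:R)) * ((j:R)^2+(j:R))) * this
  have hexp := prod_add_nilp c hcc (Finset.range m)
    (fun k => ((k:R)+1)*((p:R) - ((k:R)+1)))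
  have hgoal : ∀ k ∈ Finset.range m,
      ((p:R))^2*((j:R)^2+(j:R)) + ((k:R)+1)*(((p - (k+1) : ℕ)):R)
        = (fun k => ((k:R)+1)*((p:R) - ((k:R)+1))) k + c := by
    intro k hk
    have hk' := Finset.mem_range.mp hk
    have : (((p - (k+1) : ℕ)):R) = (p:R) - ((k:R)+1) := by
      have h : ((k+1:ℕ)) ≤ p := by omega
      push_cast [Nat.cast_sub h]
      ring
    rw [this, hc_def]
    ring
  
  rw [Finset.prod_congr rfl hgoal, hexp]
  have hsub : ∀ l, l < m → (((p - (l+1) : ℕ)):R) = (p:R) - ((l:R)+1) := by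
    intro l hl
    have h : ((l+1:ℕ)) ≤ p := by omega
    push_cast [Nat.cast_sub h]
    ring
  set N : ℕ := ∑ k ∈ Finset.range m, ∏ l ∈ (Finset.range m).erase k,
    ((l+1)*(p-(l+1))) with hN_def
  have hS : (∑ i ∈ Finset.range m, ∏ l ∈ (Finset.range m).erase i,
      (((l:R))+1)*((p:R)-((l:R)+1))) = ((N : ℕ) : R) := by
    rw [hN_def, Nat.cast_sum]
    refine Finset.sum_congr rfl (fun i hi => ?_)
    rw [Nat.cast_prod]
    refine Finset.prod_congr rfl (fun l hl => ?_)
    have hlm : l < m := Finset.mem_range.mp (Finset.mem_of_mem_erase hl)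
    rw [Nat.cast_mul, hsub l hlm]
    push_cast
    ring
  obtain ⟨M, hM⟩ : p ∣ N := (ZMod.natCast_eq_zero_iff N p).mp (lemA p m hp5 hm)
  have hzero : c * ((N:ℕ) : R) = 0 := by
    rw [hM, hc_def]
    push_cast
    linear_combination (((j:R)^2+(j:R))*(M:R)) * hp3
  rw [hS, hzero, add_zero]
  exact Finset.prod_congr rfl (fun x hx => by
    rw [hsub x (Finset.mem_range.mp hx)])


lemma factorial_add_prod (a b : ℕ) :
    Nat.factorial (a + b) = Nat.factorial a * ∏ i ∈ Finset.range b, (a + i + 1) := by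
  induction b with
  | zero => simp
  | succ b ih =>
    rw [← Nat.add_assoc, Nat.factorial_succ, ih, Finset.prod_range_succ]
    ring

lemma lemD (p n : ℕ) (hp : 1 ≤ p) :
    Nat.factorial (p * n) = p ^ n * Nat.factorial n *
      ∏ j ∈ Finset.range n, ∏ k ∈ Finset.range (p-1), (p*j + k + 1) := by
  induction n with
  | zero => simp
  | succ n ih =>
    have h1 : p * (n+1) = p * n + p := by ring
    rw [h1, factorial_add_prod, ih]
    have hsplit : ∏ i ∈ Finset.range p, (p*n + i + 1)
        = (∏ i ∈ Finset.range (p-1), (p*n + i + 1)) * (p*(n+1)) := by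
      rw [show Finset.range p = Finset.range ((p-1)+1) from by congr 1; omega,
        Finset.prod_range_succ]
      congr 1
      rw [Nat.mul_succ]
      omega
    rw [hsplit, Finset.prod_range_succ, Nat.factorial_succ, pow_succ]
    ring

theorem jacobsthal_congruence (p : ℕ) (hp : p.Prime) (hp5 : 5 ≤ p) (a b : ℕ) (hab : b ≤ a) :
    (p * a).choose (p * b) ≡ a.choose b [MOD p ^ 3] := by
  haveI : Fact p.Prime := ⟨hp⟩
  obtain ⟨m, hm⟩ : ∃ m, p = 2*m+1 := by
    obtain ⟨m, hm'⟩ := hp.odd_of_ne_two (by omega)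
    exact ⟨m, by omega⟩
  set P : ℕ → ℕ := fun n => ∏ j ∈ Finset.range n, ∏ k ∈ Finset.range (p-1), (p*j+k+1)
    with hP
  have hp1 : 1 ≤ p := by omega
  have hfac := Nat.choose_mul_factorial_mul_factorial
    (Nat.mul_le_mul_left p hab)
  have hsub : p*a - p*b = p*(a-b) := (Nat.mul_sub p a b).symm
  rw [hsub, lemD p a hp1, lemD p b hp1, lemD p (a-b) hp1] at hfac
  have habfac := Nat.choose_mul_factorial_mul_factorial hab
  have hE : (p*a).choose (p*b) * P b * P (a-b) = a.choose b * P a := by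
    have hK : 0 < p^a * (Nat.factorial b * Nat.factorial (a-b)) := by
      positivity
    apply Nat.eq_of_mul_eq_mul_right hK
    have hpow : p^b * p^(a-b) = p^a := by rw [← pow_add]; congr 1; omega
    calc (p*a).choose (p*b) * P b * P (a-b) * (p^a * (Nat.factorial b * Nat.factorial (a-b)))
        = (p*a).choose (p*b) * (p^b * Nat.factorial b * P b)
            * (p^(a-b) * Nat.factorial (a-b) * P (a-b)) := by rw [← hpow]; ring
      _ = p^a * Nat.factorial a * P a := hfac
      _ = p^a * (a.choose b * Nat.factorial b * Nat.factorial (a-b)) * P a := by rw [habfac]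
      _ = a.choose b * P a * (p^a * (Nat.factorial b * Nat.factorial (a-b))) := by ring
  set R := ZMod (p^3)
  set w : R := (Nat.factorial (p-1) : R) with hw
  have hPn : ∀ n : ℕ, ((P n : ℕ) : R) = w ^ n := by
    intro n
    simp only [hP]
    simp only [R, Nat.cast_prod]
    calc ∏ x ∈ Finset.range n, ∏ i ∈ Finset.range (p-1), ((p*x+i+1 : ℕ) : R)
        = ∏ _x ∈ Finset.range n, w := Finset.prod_congr rfl (fun j _ => by
            rw [← Nat.cast_prod, hw]
            exact lemB p m j hp5 hm)
      _ = w ^ n := by rw [Finset.prod_const, Finset.card_range]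
  have hcast : ((p*a).choose (p*b) : R) * w^b * w^(a-b) = (a.choose b : R) * w^a := by
    have h := congrArg (fun n : ℕ => (n : R)) hE
    simp only [R, Nat.cast_mul] at h
    rw [hPn b, hPn (a-b), hPn a] at h
    exact h
  have hwunit : IsUnit w := by
    rw [hw, ZMod.isUnit_iff_coprime]
    apply Nat.Coprime.pow_right
    rw [Nat.coprime_comm]
    refine (Nat.Prime.coprime_iff_not_dvd hp).mpr (fun h => ?_)
    have := (Nat.Prime.dvd_factorial hp).mp h
    omega
  have hu : IsUnit (w^b * w^(a-b)) := (hwunit.pow b).mul (hwunit.pow (a-b))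
  have hwa : w ^ a = w^b * w^(a-b) := by rw [← pow_add]; congr 1; omega
  have hfin : (((p*a).choose (p*b) : ℕ) : R) = ((a.choose b : ℕ) : R) := by
    apply hu.mul_left_cancel
    calc (w^b*w^(a-b)) * (((p*a).choose (p*b) : ℕ) : R)
        = (((p*a).choose (p*b) : ℕ) : R) * w^b * w^(a-b) := by ring
      _ = ((a.choose b : ℕ) : R) * w^a := hcast
      _ = (w^b*w^(a-b)) * ((a.choose b : ℕ) : R) := by rw [hwa]; ring
  exact (ZMod.natCast_eq_natCast_iff _ _ _).mp hfin
end

section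
/- For every prime p ≥ 5 and every natural number n all of whose base-p digits belong to {0, p−1}, A(n) ≡ 1 (mod p^3), where A denotes the Apéry numbers. -/
open Finset

namespace AperyAux

def Wd (p M : ℕ) : ℕ := ∏ i ∈ Finset.range M, if p ∣ (i+1) then 1 else (i+1)

def vfa (p M : ℕ) : ℕ := (M.factorial).factorization p

def Ua (p M : ℕ) : ℕ := M.factorial / p ^ vfa p M

lemma Wd_succ (p M : ℕ) : Wd p (M+1) = Wd p M * (if p ∣ (M+1) then 1 else (M+1)) :=
  Finset.prod_range_succ _ _

lemma Wd_pos {p : ℕ} (hp : 1 < p) (M : ℕ) : 0 < Wd p M := by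
  apply Finset.prod_pos
  intro i _
  split <;> omega

lemma factA {p : ℕ} (hp : 1 < p) : ∀ M : ℕ, M.factorial = (M / p).factorial * p ^ (M / p) * Wd p M := by
  intro M
  induction M with
  | zero => simp [Wd]
  | succ M ih =>
    by_cases hdvd : p ∣ (M+1)
    · obtain ⟨t, ht⟩ := hdvd
      have ht1 : 1 ≤ t := by
        rcases t with _ | t
        · simp at ht
        · omega
      have hpt : p * t = p * (t - 1) + p := by
        conv_lhs => rw [show t = (t-1)+1 by omega]
        ring
      have hM : M = p * (t - 1) + (p - 1) := by omega
      have hdiv1 : (M+1) / p = t := by rw [ht]; exact Nat.mul_div_cancel_left t (by omega)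
      have hdiv2 : M / p = t - 1 := by
        rw [hM, Nat.add_comm, Nat.add_mul_div_left _ _ (by omega : 0 < p),
          Nat.div_eq_of_lt (by omega)]
        omega
      have hW : Wd p (M+1) = Wd p M := by
        rw [Wd_succ, if_pos ⟨t, ht⟩, mul_one]
      rw [Nat.factorial_succ, ih, hW, hdiv1, hdiv2]
      have h2 : t.factorial = t * (t-1).factorial := (Nat.mul_factorial_pred (by omega)).symm
      rw [h2, ht]
      have h3 : p ^ t = p * p ^ (t-1) := by
        conv_lhs => rw [show t = 1 + (t-1) by omega, pow_add, pow_one]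
      rw [h3]; ring
    · have hdiv1 : (M+1) / p = M / p := by
        rw [Nat.succ_div, if_neg hdvd]; omega
      have hW : Wd p (M+1) = Wd p M * (M+1) := by
        rw [Wd_succ, if_neg hdvd]
      rw [Nat.factorial_succ, ih, hW, hdiv1]; ring

lemma fact_eq_s12 {p : ℕ} (hp : p.Prime) (M : ℕ) : M.factorial = p ^ vfa p M * Ua p M := by
  exact (Nat.ordProj_mul_ordCompl_eq_self M.factorial p).symm

lemma Ua_not_dvd {p : ℕ} (hp : p.Prime) (M : ℕ) : ¬ p ∣ Ua p M :=
  Nat.not_dvd_ordCompl hp (Nat.factorial_ne_zero M)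

lemma Ua_pos {p : ℕ} (hp : p.Prime) (M : ℕ) : 0 < Ua p M :=
  Nat.ordCompl_pos p (Nat.factorial_ne_zero M)

lemma vfa_rec {p : ℕ} (hp : p.Prime) {t c : ℕ} (hc : c < p) : vfa p (p*t + c) = t + vfa p t := by
  have h1 := factA hp.one_lt (p*t + c)
  have hdiv : (p*t + c) / p = t := by
    rw [Nat.add_comm, Nat.add_mul_div_left _ _ hp.pos, Nat.div_eq_of_lt hc]; omega
  rw [hdiv] at h1
  have hWnd : ¬ p ∣ Wd p (p*t+c) := by
    intro hd
    obtain ⟨i, hi, hdd⟩ := hp.prime.exists_mem_finset_dvd (by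
      rw [Wd] at hd; exact hd)
    by_cases hdi : p ∣ (i+1)
    · rw [if_pos hdi] at hdd; exact hp.one_lt.ne' (Nat.eq_one_of_dvd_one hdd ▸ rfl)
    · rw [if_neg hdi] at hdd; exact hdi hdd
  have : vfa p (p*t+c) = ((t.factorial * p ^ t * Wd p (p*t+c)).factorization) p := by
    rw [vfa, h1]
  rw [this, Nat.factorization_mul (mul_ne_zero (Nat.factorial_ne_zero t) (pow_ne_zero _ hp.pos.ne')) (Wd_pos hp.one_lt (p*t+c)).ne',
    Nat.factorization_mul (Nat.factorial_ne_zero t) (pow_ne_zero _ hp.pos.ne')]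
  simp [hp.factorization_pow, Nat.factorization_eq_zero_of_not_dvd hWnd, vfa]
  ring


lemma Ua_rec {p : ℕ} (hp : p.Prime) {t c : ℕ} (hc : c < p) :
    Ua p (p*t + c) = Wd p (p*t + c) * Ua p t := by
  have h1 := factA hp.one_lt (p*t + c)
  have hdiv : (p*t + c) / p = t := by
    rw [Nat.add_comm, Nat.add_mul_div_left _ _ hp.pos, Nat.div_eq_of_lt hc]; omega
  rw [hdiv] at h1
  have h2 : p ^ vfa p (p*t+c) * Ua p (p*t+c) = (p*t+c).factorial := (fact_eq_s12 hp _).symm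
  rw [h1, fact_eq_s12 hp t, vfa_rec hp hc] at h2
  have h3 : p ^ (t + vfa p t) * Ua p (p*t+c)
      = p ^ (t + vfa p t) * (Wd p (p*t+c) * Ua p t) := by
    rw [h2]; ring
  exact Nat.eq_of_mul_eq_mul_left (pow_pos hp.pos _) h3

lemma Wd_mod {p : ℕ} (hp : p.Prime) [Fact p.Prime] (M : ℕ) :
    (Wd p M : ZMod p) = (-1)^(M/p) * ((M % p).factorial : ZMod p) := by
  induction M with
  | zero => simp [Wd]
  | succ M ih =>
    have hp2 := hp.two_le
    have hdm := Nat.div_add_mod M p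
    by_cases hdvd : p ∣ (M+1)
    · obtain ⟨t, ht⟩ := hdvd
      have ht1 : 1 ≤ t := by
        rcases t with _ | t
        · simp at ht
        · omega
      have hpt : p * t = p * (t - 1) + p := by
        conv_lhs => rw [show t = (t-1)+1 by omega]
        ring
      have hMeq : M = p * (t-1) + (p-1) := by omega
      have hMmod : M % p = p - 1 := by
        rw [hMeq, Nat.add_comm, Nat.add_mul_mod_self_left, Nat.mod_eq_of_lt (by omega)]
      have hM1mod : (M+1) % p = 0 := by rw [ht]; simp [Nat.mul_mod_right]
      have hdivsucc : (M+1)/p = M/p + 1 := by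
        rw [Nat.succ_div, if_pos ⟨t, ht⟩]
      rw [Wd_succ, if_pos ⟨t, ht⟩, mul_one, ih, hdivsucc, hM1mod, hMmod]
      rw [pow_succ]
      have hw : ((p-1).factorial : ZMod p) = -1 := ZMod.wilsons_lemma p
      rw [hw]
      simp
    · have h1 : M % p < p := Nat.mod_lt _ hp.pos
      have h2 : M % p + 1 ≠ p := by
        intro h
        refine hdvd ⟨M/p + 1, ?_⟩
        have h4 : p*(M/p+1) = p*(M/p) + p := by ring
        omega
      have hMmod : (M+1) % p = M % p + 1 := by
        rw [Nat.add_mod, Nat.mod_eq_of_lt hp.one_lt, Nat.mod_eq_of_lt (by omega)]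
      have hdivsucc : (M+1)/p = M/p := by rw [Nat.succ_div, if_neg hdvd]; omega
      have hM : (M : ZMod p) = ((M % p : ℕ) : ZMod p) := by
        conv_lhs => rw [← hdm]
        push_cast
        simp [ZMod.natCast_self]
      rw [Wd_succ, if_neg hdvd, hdivsucc, hMmod, Nat.factorial_succ]
      push_cast
      rw [ih, hM]
      ring


lemma Wd_mod' {p : ℕ} (hp : p.Prime) [Fact p.Prime] {t c : ℕ} (hc : c < p) :
    (Wd p (p*t + c) : ZMod p) = (-1)^t * (c.factorial : ZMod p) := by
  have hdiv : (p*t + c) / p = t := by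
    rw [Nat.add_comm, Nat.add_mul_div_left _ _ hp.pos, Nat.div_eq_of_lt hc]; omega
  have hmod : (p*t + c) % p = c := by
    rw [Nat.add_comm, Nat.add_mul_mod_self_left, Nat.mod_eq_of_lt hc]
  rw [Wd_mod hp, hdiv, hmod]

lemma vfa_small {p : ℕ} (hp : p.Prime) {c : ℕ} (hc : c < p) : vfa p c = 0 := by
  rw [vfa, Nat.factorization_eq_zero_of_not_dvd]
  rw [hp.dvd_factorial]; omega

lemma Ua_small {p : ℕ} (hp : p.Prime) {c : ℕ} (hc : c < p) : Ua p c = c.factorial := by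
  rw [Ua, vfa_small hp hc, pow_zero, Nat.div_one]

lemma vfa_mono {p : ℕ} (hp : p.Prime) {M N : ℕ} (h : M ≤ N) : vfa p M ≤ vfa p N := by
  rw [vfa, vfa, ← hp.pow_dvd_iff_le_factorization (Nat.factorial_ne_zero N)]
  exact dvd_trans (Nat.ordProj_dvd _ p) (Nat.factorial_dvd_factorial h)

lemma Ua_cast_ne {p : ℕ} (hp : p.Prime) [Fact p.Prime] (M : ℕ) : ((Ua p M : ℕ) : ZMod p) ≠ 0 := by
  rw [Ne, ZMod.natCast_eq_zero_iff]
  exact Ua_not_dvd hp M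

lemma fac_cast_ne {p : ℕ} (hp : p.Prime) [Fact p.Prime] {c : ℕ} (hc : c < p) :
    ((c.factorial : ℕ) : ZMod p) ≠ 0 := by
  rw [Ne, ZMod.natCast_eq_zero_iff, hp.dvd_factorial]; omega

/-- the product of the two binomial coefficients in an Apéry-number term,
with `s = n - k`. -/
def Pb (s k : ℕ) : ℕ := (s+k).choose k * (s+2*k).choose k

def vv (p s k : ℕ) : ℕ := (Pb s k).factorization p

def uu (p s k : ℕ) : ℕ := Pb s k / p ^ vv p s k

lemma Pb_pos (s k : ℕ) : 0 < Pb s k :=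
  Nat.mul_pos (Nat.choose_pos (by omega)) (Nat.choose_pos (by omega))

lemma Pkey (s k : ℕ) : Pb s k * (k.factorial * k.factorial * s.factorial) = (s+2*k).factorial := by
  have h1 : (s+k).choose k * k.factorial * s.factorial = (s+k).factorial := by
    have := Nat.choose_mul_factorial_mul_factorial (show k ≤ s+k by omega)
    simpa using this
  have h2 : (s+2*k).choose k * k.factorial * (s+k).factorial = (s+2*k).factorial := by
    have := Nat.choose_mul_factorial_mul_factorial (show k ≤ s+2*k by omega)
    have he : s + 2*k - k = s + k := by omega
    rw [he] at this
    exact this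
  have key : (Pb s k * (k.factorial * k.factorial * s.factorial)) * (s+k).factorial
      = (s+2*k).factorial * (s+k).factorial := by
    calc (Pb s k * (k.factorial * k.factorial * s.factorial)) * (s+k).factorial
        = ((s+k).choose k * k.factorial * s.factorial) * ((s+2*k).choose k * k.factorial * (s+k).factorial) := by
          rw [Pb]; ring
      _ = (s+k).factorial * (s+2*k).factorial := by rw [h1, h2]
      _ = (s+2*k).factorial * (s+k).factorial := by ring
  exact Nat.eq_of_mul_eq_mul_right (Nat.factorial_pos _) key

lemma PU (p s k : ℕ) : Pb s k = p ^ vv p s k * uu p s k :=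
  (Nat.ordProj_mul_ordCompl_eq_self (Pb s k) p).symm

lemma uu_not_dvd {p : ℕ} (hp : p.Prime) (s k : ℕ) : ¬ p ∣ uu p s k :=
  Nat.not_dvd_ordCompl hp (Pb_pos s k).ne'

lemma uu_cast_ne {p : ℕ} (hp : p.Prime) [Fact p.Prime] (s k : ℕ) : ((uu p s k : ℕ) : ZMod p) ≠ 0 := by
  rw [Ne, ZMod.natCast_eq_zero_iff]
  exact uu_not_dvd hp s k

lemma vv_add {p : ℕ} (hp : p.Prime) (s k : ℕ) :
    vv p s k + (2 * vfa p k + vfa p s) = vfa p (s + 2*k) := by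
  have h := congrArg (fun m => m.factorization p) (Pkey s k)
  rw [Nat.factorization_mul (Pb_pos s k).ne' (by positivity)] at h
  rw [Nat.factorization_mul (by positivity) (Nat.factorial_ne_zero s)] at h
  rw [Nat.factorization_mul (Nat.factorial_ne_zero k) (Nat.factorial_ne_zero k)] at h
  simp only [Finsupp.add_apply] at h
  simp only [vv, vfa] at *
  omega

lemma uuU {p : ℕ} (hp : p.Prime) (s k : ℕ) :
    uu p s k * (Ua p k * Ua p k * Ua p s) = Ua p (s + 2*k) := by
  have hk := Pkey s k
  rw [PU p s k, fact_eq_s12 hp k, fact_eq_s12 hp s, fact_eq_s12 hp (s+2*k)] at hk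
  rw [← vv_add hp s k] at hk
  have h2 : p ^ (vv p s k + (2 * vfa p k + vfa p s)) * (uu p s k * (Ua p k * Ua p k * Ua p s))
      = p ^ (vv p s k + (2 * vfa p k + vfa p s)) * Ua p (s+2*k) := by
    calc p ^ (vv p s k + (2 * vfa p k + vfa p s)) * (uu p s k * (Ua p k * Ua p k * Ua p s))
        = p ^ vv p s k * uu p s k * (p ^ vfa p k * Ua p k * (p ^ vfa p k * Ua p k) * (p ^ vfa p s * Ua p s)) := by
          rw [pow_add, two_mul, pow_add, pow_add]; ring
      _ = _ := hk
  exact Nat.eq_of_mul_eq_mul_left (pow_pos hp.pos _) h2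


lemma modh {p A B : ℕ} (h : B < p) : (p*A + B) % p = B := by
  rw [Nat.add_comm, Nat.add_mul_mod_self_left, Nat.mod_eq_of_lt h]

lemma divh {p A B : ℕ} (hp : 0 < p) (h : B < p) : (p*A + B) / p = A := by
  rw [Nat.add_comm, Nat.add_mul_div_left _ _ hp, Nat.div_eq_of_lt h]; omega

lemma vfa_mul {p : ℕ} (hp : p.Prime) (t : ℕ) : vfa p (p*t) = t + vfa p t := by
  have := vfa_rec hp (t := t) hp.pos
  simpa using this

lemma Ua_mul {p : ℕ} (hp : p.Prime) (t : ℕ) : Ua p (p*t) = Wd p (p*t) * Ua p t := by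
  have := Ua_rec hp (t := t) hp.pos
  simpa using this

lemma Wd_mul_mod {p : ℕ} (hp : p.Prime) [Fact p.Prime] (t : ℕ) :
    (Wd p (p*t) : ZMod p) = (-1)^t := by
  have := Wd_mod' hp (t := t) (c := 0) hp.pos
  simpa using this

def Dg (p n : ℕ) : Prop := ∀ e ∈ Nat.digits p n, e = 0 ∨ e = p - 1

lemma Dg_tail {p : ℕ} (hp : 1 < p) {n : ℕ} (h : Dg p n) : Dg p (n / p) := by
  rcases Nat.eq_zero_or_pos n with h0 | h0
  · rw [h0, Nat.zero_div]; exact h0 ▸ h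
  · intro e he
    exact h e (by rw [Nat.digits_def' hp h0]; exact List.mem_cons_of_mem _ he)

lemma Dg_head {p : ℕ} (hp : 1 < p) {n : ℕ} (h : Dg p n) (hn : n ≠ 0) :
    n % p = 0 ∨ n % p = p - 1 := by
  exact h (n % p) (by rw [Nat.digits_def' hp (Nat.pos_of_ne_zero hn)]; exact List.mem_cons_self)

lemma Dg_ge {p : ℕ} (hp : 1 < p) {n : ℕ} (h : Dg p n) (hn : n ≠ 0) : p - 1 ≤ n := by
  rcases Nat.lt_or_ge n p with hlt | hge
  · have := Dg_head hp h hn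
    rw [Nat.mod_eq_of_lt hlt] at this
    omega
  · omega

/-- transfer lemma: multiplying everything by `p` preserves valuation and unit mod p. -/
lemma transfer {p : ℕ} (hp : p.Prime) [Fact p.Prime] {d : ℕ} (hd : d < p) (s q : ℕ) :
    vv p (p*s+d) (p*q) = vv p s q ∧ ((uu p (p*s+d) (p*q) : ZMod p) = (uu p s q : ZMod p)) := by
  have hps : (p*s+d) + 2*(p*q) = p*(s+2*q) + d := by ring
  have e1 := vv_add hp (p*s+d) (p*q)
  have e2 := vv_add hp s q
  have h1 : vfa p (p*s+d) = s + vfa p s := vfa_rec hp hd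
  have h2 : vfa p (p*q) = q + vfa p q := vfa_mul hp q
  have h3 : vfa p ((p*s+d) + 2*(p*q)) = (s+2*q) + vfa p (s+2*q) := by
    rw [hps]; exact vfa_rec hp hd
  constructor
  · omega
  · have u1 := uuU hp (p*s+d) (p*q)
    have u2 := uuU hp s q
    have r1 : Ua p (p*q) = Wd p (p*q) * Ua p q := Ua_mul hp q
    have r2 : Ua p (p*s+d) = Wd p (p*s+d) * Ua p s := Ua_rec hp hd
    have r3 : Ua p ((p*s+d)+2*(p*q)) = Wd p (p*(s+2*q)+d) * Ua p (s+2*q) := by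
      rw [hps]; exact Ua_rec hp hd
    rw [r1, r2, r3] at u1
    have c1 := congrArg (fun x : ℕ => (x : ZMod p)) u1
    have c2 := congrArg (fun x : ℕ => (x : ZMod p)) u2
    push_cast at c1 c2
    rw [Wd_mul_mod hp q] at c1
    rw [Wd_mod' hp (t := s) (c := d) hd] at c1
    rw [Wd_mod' hp (t := s+2*q) (c := d) hd] at c1
    have hC : ((uu p (p*s+d) (p*q) : ℕ) : ZMod p) *
        ((-1)^(s+2*q) * (d.factorial : ZMod p) *
          ((Ua p q : ZMod p) * (Ua p q) * (Ua p s)))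
        = ((uu p s q : ℕ) : ZMod p) *
        ((-1)^(s+2*q) * (d.factorial : ZMod p) *
          ((Ua p q : ZMod p) * (Ua p q) * (Ua p s))) := by
      calc ((uu p (p*s+d) (p*q) : ℕ) : ZMod p) *
          ((-1)^(s+2*q) * (d.factorial : ZMod p) *
            ((Ua p q : ZMod p) * (Ua p q) * (Ua p s)))
          = ((uu p (p*s+d) (p*q) : ℕ) : ZMod p) *
            ((-1)^q * (Ua p q : ZMod p) *
              ((-1)^q * (Ua p q : ZMod p)) *
              ((-1)^s * (d.factorial : ZMod p) * (Ua p s : ZMod p))) := by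
            ring
        _ = (-1)^(s+2*q) * (d.factorial : ZMod p) * ((Ua p (s+2*q) : ℕ) : ZMod p) := c1
        _ = (-1)^(s+2*q) * (d.factorial : ZMod p) *
              (((uu p s q : ℕ) : ZMod p) * ((Ua p q : ZMod p) * (Ua p q) * (Ua p s))) := by
            rw [← c2]
        _ = _ := by ring
    have hne : ((-1 : ZMod p)^(s+2*q) * (d.factorial : ZMod p) *
        ((Ua p q : ZMod p) * (Ua p q) * (Ua p s))) ≠ 0 := by
      apply mul_ne_zero
      apply mul_ne_zero
      · exact pow_ne_zero _ (neg_ne_zero.mpr one_ne_zero)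
      · exact fac_cast_ne hp hd
      · exact mul_ne_zero (mul_ne_zero (Ua_cast_ne hp q) (Ua_cast_ne hp q)) (Ua_cast_ne hp s)
    exact mul_right_cancel₀ hne hC

lemma MODP {p : ℕ} (hp : p.Prime) [Fact p.Prime] :
    ∀ n s q : ℕ, s + q = n → Dg p n → 1 ≤ q → 1 ≤ vv p s q := by
  intro n
  induction n using Nat.strong_induction_on with
  | _ n IH =>
    intro s q hsq hD hq
    have hs : s = p * (s/p) + s % p := by
      have := Nat.div_add_mod s p; omega
    have hqd : q = p * (q/p) + q % p := by
      have := Nat.div_add_mod q p; omega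
    set S := s / p with hS
    set t := s % p with ht'
    set Q := q / p with hQ
    set r := q % p with hr'
    have ht : t < p := Nat.mod_lt _ hp.pos
    have hr : r < p := Nat.mod_lt _ hp.pos
    by_cases hr0 : r = 0
    · have hQ1 : 1 ≤ Q := by
        rcases Nat.eq_zero_or_pos Q with h0 | h0
        · rw [h0] at hqd; simp [hr0] at hqd; omega
        · exact h0
      have hv := (transfer hp ht S Q).1
      have hsq2 : p*S + t = s := hs.symm
      have hqq : p*Q = q := by omega
      rw [hsq2, hqq] at hv
      have hn' : S + Q < n := by
        have h2 : 2*(S+Q) ≤ p*(S+Q) := Nat.mul_le_mul_right _ hp.two_le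
        have h3 : p*(S+Q) = p*S + p*Q := by ring
        omega
      have hdiv : n / p = S + Q := by
        have hnval : n = p*(S+Q) + t := by
          have h3 : p*(S+Q) = p*S + p*Q := by ring
          omega
        rw [hnval]; exact divh hp.pos ht
      have hD' : Dg p (S+Q) := hdiv ▸ Dg_tail hp.one_lt hD
      have := IH (S+Q) hn' S Q rfl hD' hQ1
      omega
    · have hn0 : n ≠ 0 := by omega
      have hnval : n = p*(S+Q) + (t+r) := by
        have h3 : p*(S+Q) = p*S + p*Q := by ring
        omega
      have hd := Dg_head hp.one_lt hD hn0
      have htr : t + r = p - 1 ∨ t + r = p := by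
        rcases Nat.lt_or_ge (t+r) p with hlt | hge
        · have : n % p = t + r := by rw [hnval]; exact modh hlt
          omega
        · have hlt2 : t + r - p < p := by omega
          have hnn : n = p*(S+Q+1) + (t+r-p) := by
            have h3 : p*(S+Q+1) = p*(S+Q) + p := by ring
            omega
          have : n % p = t + r - p := by
            rw [hnn]; exact modh hlt2
          omega
      have e1 := vv_add hp s q
      have e2 := vv_add hp S Q
      have hvq : vfa p q = Q + vfa p Q := by rw [hqd]; exact vfa_rec hp hr
      have hvs : vfa p s = S + vfa p S := by rw [hs]; exact vfa_rec hp ht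
      have hmono : vfa p (S+2*Q) ≤ vfa p (S+2*Q+1) := vfa_mono hp (by omega)
      have hv2 : vfa p (s + 2*q) = (S+2*Q+1) + vfa p (S+2*Q+1) := by
        rcases htr with h | h
        · have : s + 2*q = p*(S+2*Q+1) + (r-1) := by
            have h3 : p*(S+2*Q+1) = p*S + 2*(p*Q) + p := by ring
            omega
          rw [this]; exact vfa_rec hp (by omega)
        · have : s + 2*q = p*(S+2*Q+1) + r := by
            have h3 : p*(S+2*Q+1) = p*S + 2*(p*Q) + p := by ring
            omega
          rw [this]; exact vfa_rec hp hr
      omega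


lemma fac_pair_sq {p : ℕ} (hp : p.Prime) [Fact p.Prime] :
    ∀ j c : ℕ, c + j + 1 = p → ((j.factorial * c.factorial : ℕ) : ZMod p)^2 = 1 := by
  intro j
  induction j with
  | zero =>
    intro c hc
    have hc1 : c = p - 1 := by omega
    subst hc1
    have hw : (((p-1).factorial : ℕ) : ZMod p) = -1 := ZMod.wilsons_lemma p
    push_cast
    rw [hw]
    simp [Nat.factorial]
  | succ j ihj =>
    intro c hc
    have ih := ihj (c+1) (by omega)
    have hid : (j+1).factorial * c.factorial * (c+1) = (j+1) * (j.factorial * (c+1).factorial) := by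
      rw [Nat.factorial_succ j, Nat.factorial_succ c]; ring
    have hx : ((j+1 : ℕ) : ZMod p) ≠ 0 := by
      rw [Ne, ZMod.natCast_eq_zero_iff]
      intro hdd
      have := Nat.le_of_dvd (by omega) hdd
      omega
    have hc1 : ((c+1 : ℕ) : ZMod p) = -((j+1 : ℕ) : ZMod p) := by
      have h0 : ((c+1 : ℕ) : ZMod p) + ((j+1 : ℕ) : ZMod p) = ((p : ℕ) : ZMod p) := by
        rw [show ((p:ℕ) : ZMod p) = (((c+1)+(j+1) : ℕ) : ZMod p) by rw [show (c+1)+(j+1) = p by omega]]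
        push_cast; ring
      rw [ZMod.natCast_self] at h0
      linear_combination h0
    have hcast := congrArg (fun x : ℕ => ((x : ZMod p))^2) hid
    push_cast at hcast ih hc1 hx ⊢
    have h2 : (((j+1).factorial : ZMod p) * (c.factorial : ZMod p))^2 * ((j : ZMod p) + 1)^2
        = 1 * ((j : ZMod p) + 1)^2 := by
      calc (((j+1).factorial : ZMod p) * (c.factorial : ZMod p))^2 * ((j : ZMod p) + 1)^2
          = (((j+1).factorial : ZMod p) * (c.factorial : ZMod p) * ((c : ZMod p) + 1))^2 := by
            rw [hc1]; ring
        _ = (((j : ZMod p) + 1) * ((j.factorial : ZMod p) * ((c+1).factorial : ZMod p)))^2 := hcast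
        _ = ((j.factorial : ZMod p) * ((c+1).factorial : ZMod p))^2 * ((j : ZMod p) + 1)^2 := by ring
        _ = 1 * ((j : ZMod p) + 1)^2 := by rw [ih]
    exact mul_right_cancel₀ (pow_ne_zero 2 hx) h2

lemma nonslotA {p : ℕ} (hp : p.Prime) [Fact p.Prime] (m₂ j' c : ℕ) (hc : c + j' + 2 = p) :
    2 ≤ vv p (p*(p*m₂ + (p-1)) + c) (j'+1) := by
  have hp2 := hp.two_le
  set m := p*m₂ + (p-1) with hm
  have e1 := vv_add hp (p*m + c) (j'+1)
  have h1 : vfa p (j'+1) = 0 := vfa_small hp (by omega)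
  have h2 : vfa p (p*m + c) = m + vfa p m := vfa_rec hp (by omega)
  have h3 : vfa p m = m₂ + vfa p m₂ := by rw [hm]; exact vfa_rec hp (by omega)
  have h6 : p*(m+1) = p*m + p := by ring
  have hs2 : (p*m + c) + 2*(j'+1) = p*(m+1) + j' := by omega
  have h4 : vfa p ((p*m + c) + 2*(j'+1)) = (m+1) + vfa p (m+1) := by
    rw [hs2]; exact vfa_rec hp (by omega)
  have h5 : vfa p (m+1) = (m₂+1) + vfa p (m₂+1) := by
    have : m + 1 = p*(m₂+1) := by
      have : p*(m₂+1) = p*m₂ + p := by ring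
      omega
    rw [this]; exact vfa_mul hp (m₂+1)
  have hmono : vfa p m₂ ≤ vfa p (m₂+1) := vfa_mono hp (by omega)
  omega

lemma nonslotB {p : ℕ} (hp : p.Prime) [Fact p.Prime] (m₃ j' w : ℕ) (hw : w + j' + 1 = p)
    (hw1 : 1 ≤ w) :
    2 ≤ vv p (p*(p*m₃ + (p-1)) + w) (j'+1) := by
  have hp2 := hp.two_le
  set m₁ := p*m₃ + (p-1) with hm1
  have e1 := vv_add hp (p*m₁ + w) (j'+1)
  have h1 : vfa p (j'+1) = 0 := vfa_small hp (by omega)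
  have h2 : vfa p (p*m₁ + w) = m₁ + vfa p m₁ := vfa_rec hp (by omega)
  have h3 : vfa p m₁ = m₃ + vfa p m₃ := by rw [hm1]; exact vfa_rec hp (by omega)
  have h6 : p*(m₁+1) = p*m₁ + p := by ring
  have hs2 : (p*m₁ + w) + 2*(j'+1) = p*(m₁+1) + (j'+1) := by omega
  have h4 : vfa p ((p*m₁ + w) + 2*(j'+1)) = (m₁+1) + vfa p (m₁+1) := by
    rw [hs2]; exact vfa_rec hp (by omega)
  have h5 : vfa p (m₁+1) = (m₃+1) + vfa p (m₃+1) := by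
    have : m₁ + 1 = p*(m₃+1) := by
      have : p*(m₃+1) = p*m₃ + p := by ring
      omega
    rw [this]; exact vfa_mul hp (m₃+1)
  have hmono : vfa p m₃ ≤ vfa p (m₃+1) := vfa_mono hp (by omega)
  omega

lemma VANR {p : ℕ} (hp : p.Prime) [Fact p.Prime] {n s q r : ℕ} (hD : Dg p n)
    (hn : n = s + (p*q + r)) (hq : 1 ≤ q) (hr : 1 ≤ r) (hrp : r < p) :
    2 ≤ vv p s (p*q + r) := by
  have hp2 := hp.two_le
  have hs : s = p * (s/p) + s % p := by have := Nat.div_add_mod s p; omega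
  set S := s / p with hS
  set t := s % p with ht'
  have ht : t < p := Nat.mod_lt _ hp.pos
  have hn0 : n ≠ 0 := by omega
  have hnval : n = p*(S+q) + (t+r) := by
    have h3 : p*(S+q) = p*S + p*q := by ring
    omega
  have hd := Dg_head hp.one_lt hD hn0
  have htr : t + r = p - 1 ∨ t + r = p := by
    rcases Nat.lt_or_ge (t+r) p with hlt | hge
    · have : n % p = t + r := by rw [hnval]; exact modh hlt
      omega
    · have hnn : n = p*(S+q+1) + (t+r-p) := by
        have h3 : p*(S+q+1) = p*(S+q) + p := by ring
        omega
      have : n % p = t + r - p := by rw [hnn]; exact modh (by omega)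
      omega
  have e1 := vv_add hp s (p*q + r)
  have hvq : vfa p (p*q + r) = q + vfa p q := vfa_rec hp hrp
  have hvs : vfa p s = S + vfa p S := by rw [hs]; exact vfa_rec hp ht
  have hv2 : vfa p (s + 2*(p*q+r)) = (S+2*q+1) + vfa p (S+2*q+1) := by
    rcases htr with h | h
    · have hh : s + 2*(p*q+r) = p*(S+2*q+1) + (r-1) := by
        have h3 : p*(S+2*q+1) = p*S + 2*(p*q) + p := by ring
        omega
      rw [hh]; exact vfa_rec hp (by omega)
    · have hh : s + 2*(p*q+r) = p*(S+2*q+1) + r := by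
        have h3 : p*(S+2*q+1) = p*S + 2*(p*q) + p := by ring
        omega
      rw [hh]; exact vfa_rec hp hrp
  rcases htr with h | h
  · have hdiv : n / p = S + q := by rw [hnval]; exact divh hp.pos (by omega)
    have hD' : Dg p (S+q) := hdiv ▸ Dg_tail hp.one_lt hD
    have hMP := MODP hp (S+q) S q rfl hD' hq
    have e2 := vv_add hp S q
    have hmono : vfa p (S+2*q) ≤ vfa p (S+2*q+1) := vfa_mono hp (by omega)
    omega
  · have hnn : n = p*(S+q+1) + (t+r-p) := by
      have h3 : p*(S+q+1) = p*(S+q) + p := by ring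
      omega
    have hdiv : n / p = S + q + 1 := by rw [hnn]; exact divh hp.pos (by omega)
    have hD' : Dg p (S+q+1) := hdiv ▸ Dg_tail hp.one_lt hD
    have hMP := MODP hp (S+q+1) (S+1) q (by omega) hD' hq
    have e2 := vv_add hp (S+1) q
    have heq : S+1+2*q = S+2*q+1 := by omega
    rw [heq] at e2
    have hmono : vfa p S ≤ vfa p (S+1) := vfa_mono hp (by omega)
    omega


lemma cast_pred {p : ℕ} (hp : p.Prime) [Fact p.Prime] : ((p-1 : ℕ) : ZMod p) = -1 := by
  have h2 : (((p-1)+1 : ℕ) : ZMod p) = 0 := by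
    rw [show (p-1)+1 = p by have := hp.two_le; omega]
    exact ZMod.natCast_self p
  push_cast at h2
  linear_combination h2

lemma slotA {p : ℕ} (hp : p.Prime) [Fact p.Prime] (m₂ j' c : ℕ) (hc : c + j' + 2 = p) :
    vv p (p*(p*m₂) + c) (j'+1) = 1 ∧
    (((uu p (p*(p*m₂) + c) (j'+1) : ℕ) : ZMod p) * ((j'+1 : ℕ) : ZMod p))^2 = 1 := by
  have hp2 := hp.two_le
  have e1 := vv_add hp (p*(p*m₂) + c) (j'+1)
  have h1 : vfa p (j'+1) = 0 := vfa_small hp (by omega)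
  have h2 : vfa p (p*(p*m₂) + c) = p*m₂ + vfa p (p*m₂) := vfa_rec hp (by omega)
  have h3 : vfa p (p*m₂) = m₂ + vfa p m₂ := vfa_mul hp m₂
  have h6 : p*(p*m₂+1) = p*(p*m₂) + p := by ring
  have hs2 : (p*(p*m₂) + c) + 2*(j'+1) = p*(p*m₂+1) + j' := by omega
  have h4 : vfa p ((p*(p*m₂) + c) + 2*(j'+1)) = (p*m₂+1) + vfa p (p*m₂+1) := by
    rw [hs2]; exact vfa_rec hp (by omega)
  have h5 : vfa p (p*m₂+1) = m₂ + vfa p m₂ := vfa_rec hp (by omega)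
  have hvv : vv p (p*(p*m₂) + c) (j'+1) = 1 := by omega
  refine ⟨hvv, ?_⟩
  -- units
  have u1 := uuU hp (p*(p*m₂) + c) (j'+1)
  have rj : Ua p (j'+1) = (j'+1).factorial := Ua_small hp (by omega)
  have rs : Ua p (p*(p*m₂) + c) = Wd p (p*(p*m₂) + c) * Ua p (p*m₂) := Ua_rec hp (by omega)
  have rm : Ua p (p*m₂) = Wd p (p*m₂) * Ua p m₂ := Ua_mul hp m₂
  have rs2 : Ua p ((p*(p*m₂) + c) + 2*(j'+1)) = Wd p (p*(p*m₂+1) + j') * Ua p (p*m₂+1) := by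
    rw [hs2]; exact Ua_rec hp (by omega)
  have rm1 : Ua p (p*m₂+1) = Wd p (p*m₂+1) * Ua p m₂ := Ua_rec hp (by omega)
  rw [rj, rs, rm, rs2, rm1] at u1
  have c1 := congrArg (fun x : ℕ => (x : ZMod p)) u1
  push_cast at c1
  rw [Wd_mod' hp (t := p*m₂) (c := c) (by omega)] at c1
  rw [Wd_mul_mod hp m₂] at c1
  rw [Wd_mod' hp (t := p*m₂+1) (c := j') (by omega)] at c1
  rw [Wd_mod' hp (t := m₂) (c := 1) (by omega)] at c1
  simp only [Nat.factorial_one] at c1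
  -- c1 : uu * (j!*j!*((-1)^(p*m₂)*c! * ((-1)^(m₂) * Um₂)))
  --    = (-1)^(p*m₂+1) * j'! * ((-1)^(m₂) * 1 * Um₂)
  have E3 : ((uu p (p*(p*m₂) + c) (j'+1) : ℕ) : ZMod p) *
      (((j'+1).factorial : ZMod p) * ((j'+1).factorial : ZMod p) * (c.factorial : ZMod p))
      = -((j'.factorial : ℕ) : ZMod p) := by
    have hne : ((-1 : ZMod p)^(p*m₂) * (-1 : ZMod p)^(m₂) * ((Ua p m₂ : ℕ) : ZMod p)) ≠ 0 := by
      exact mul_ne_zero (mul_ne_zero (pow_ne_zero _ (neg_ne_zero.mpr one_ne_zero))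
        (pow_ne_zero _ (neg_ne_zero.mpr one_ne_zero))) (Ua_cast_ne hp m₂)
    apply mul_right_cancel₀ hne
    linear_combination c1
  have hjf : ((j'+1 : ℕ) : ZMod p) * ((j'.factorial : ℕ) : ZMod p)
      = (((j'+1).factorial : ℕ) : ZMod p) := by
    rw [Nat.factorial_succ]; push_cast; ring
  have E4 : (((uu p (p*(p*m₂) + c) (j'+1) : ℕ) : ZMod p) * ((j'+1 : ℕ) : ZMod p) *
      (((j'+1).factorial : ZMod p) * (c.factorial : ZMod p))) * (((j'+1).factorial : ZMod p))
      = (-1) * (((j'+1).factorial : ZMod p)) := by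
    linear_combination ((j'+1 : ℕ) : ZMod p) * E3 - hjf
  have E5 := mul_right_cancel₀ (fac_cast_ne hp (c := j'+1) (by omega)) E4
  have hsq := congrArg (fun x : ZMod p => x^2) E5
  have hfp := fac_pair_sq hp (j'+1) c (by omega)
  push_cast at hfp
  calc (((uu p (p*(p*m₂) + c) (j'+1) : ℕ) : ZMod p) * ((j'+1 : ℕ) : ZMod p))^2
      = (((uu p (p*(p*m₂) + c) (j'+1) : ℕ) : ZMod p) * ((j'+1 : ℕ) : ZMod p))^2 *
        ((((j'+1).factorial : ZMod p) * (c.factorial : ZMod p))^2) := by rw [hfp]; ring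
    _ = (-1 : ZMod p)^2 := by rw [← hsq]; ring
    _ = 1 := by ring

lemma slotB {p : ℕ} (hp : p.Prime) [Fact p.Prime] (m₂ j' c : ℕ) (hc : c + j' + 2 = p) :
    vv p (p*(p*m₂ + (p-2)) + (c+1)) (j'+1) = 1 ∧
    (((uu p (p*(p*m₂ + (p-2)) + (c+1)) (j'+1) : ℕ) : ZMod p) * ((j'+1 : ℕ) : ZMod p))^2 = 1 := by
  have hp2 := hp.two_le
  have e1 := vv_add hp (p*(p*m₂ + (p-2)) + (c+1)) (j'+1)
  have h1 : vfa p (j'+1) = 0 := vfa_small hp (by omega)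
  have h2 : vfa p (p*(p*m₂ + (p-2)) + (c+1)) = (p*m₂ + (p-2)) + vfa p (p*m₂ + (p-2)) :=
    vfa_rec hp (by omega)
  have h3 : vfa p (p*m₂ + (p-2)) = m₂ + vfa p m₂ := vfa_rec hp (by omega)
  have h6 : p*(p*m₂ + (p-2) + 1) = p*(p*m₂ + (p-2)) + p := by ring
  have hs2 : (p*(p*m₂ + (p-2)) + (c+1)) + 2*(j'+1) = p*(p*m₂ + (p-2) + 1) + (j'+1) := by omega
  have h4 : vfa p ((p*(p*m₂ + (p-2)) + (c+1)) + 2*(j'+1))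
      = (p*m₂ + (p-2) + 1) + vfa p (p*m₂ + (p-2) + 1) := by
    rw [hs2]; exact vfa_rec hp (by omega)
  have h7 : p*m₂ + (p-2) + 1 = p*m₂ + (p-1) := by omega
  have h5 : vfa p (p*m₂ + (p-2) + 1) = m₂ + vfa p m₂ := by
    rw [h7]; exact vfa_rec hp (by omega)
  have hvv : vv p (p*(p*m₂ + (p-2)) + (c+1)) (j'+1) = 1 := by omega
  refine ⟨hvv, ?_⟩
  have u1 := uuU hp (p*(p*m₂ + (p-2)) + (c+1)) (j'+1)
  have rj : Ua p (j'+1) = (j'+1).factorial := Ua_small hp (by omega)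
  have rs : Ua p (p*(p*m₂ + (p-2)) + (c+1))
      = Wd p (p*(p*m₂ + (p-2)) + (c+1)) * Ua p (p*m₂ + (p-2)) := Ua_rec hp (by omega)
  have rm : Ua p (p*m₂ + (p-2)) = Wd p (p*m₂ + (p-2)) * Ua p m₂ := Ua_rec hp (by omega)
  have rs2 : Ua p ((p*(p*m₂ + (p-2)) + (c+1)) + 2*(j'+1))
      = Wd p (p*(p*m₂ + (p-2) + 1) + (j'+1)) * Ua p (p*m₂ + (p-2) + 1) := by
    rw [hs2]; exact Ua_rec hp (by omega)
  have rm1 : Ua p (p*m₂ + (p-2) + 1) = Wd p (p*m₂ + (p-1)) * Ua p m₂ := by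
    rw [h7]; exact Ua_rec hp (by omega)
  rw [rj, rs, rm, rs2, rm1] at u1
  have c1 := congrArg (fun x : ℕ => (x : ZMod p)) u1
  push_cast at c1
  rw [Wd_mod' hp (t := p*m₂ + (p-2)) (c := c+1) (by omega)] at c1
  rw [Wd_mod' hp (t := m₂) (c := p-2) (by omega)] at c1
  rw [Wd_mod' hp (t := p*m₂ + (p-2) + 1) (c := j'+1) (by omega)] at c1
  rw [Wd_mod' hp (t := m₂) (c := p-1) (by omega)] at c1
  -- (p-1)! = (p-1)*(p-2)!
  have hfs : ((p-1).factorial : ℕ) = (p-1) * (p-2).factorial := by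
    rw [show p-1 = (p-2)+1 by omega, Nat.factorial_succ]
  rw [hfs] at c1
  push_cast at c1
  rw [cast_pred hp] at c1
  -- cancel the common invertible factor
  have E3 : ((uu p (p*(p*m₂ + (p-2)) + (c+1)) (j'+1) : ℕ) : ZMod p) *
      (((j'+1).factorial : ZMod p) * (((c+1).factorial : ℕ) : ZMod p))
      = 1 := by
    have hne : (((j'+1).factorial : ZMod p) * ((-1 : ZMod p)^(p*m₂ + (p-2)) * (-1 : ZMod p)^(m₂) *
        (((p-2).factorial : ℕ) : ZMod p) * ((Ua p m₂ : ℕ) : ZMod p))) ≠ 0 := by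
      refine mul_ne_zero (fac_cast_ne hp (by omega)) ?_
      refine mul_ne_zero (mul_ne_zero (mul_ne_zero (pow_ne_zero _ (neg_ne_zero.mpr one_ne_zero))
        (pow_ne_zero _ (neg_ne_zero.mpr one_ne_zero))) (fac_cast_ne hp (by omega)))
        (Ua_cast_ne hp m₂)
    apply mul_right_cancel₀ hne
    linear_combination c1
  -- (c+1)! = (c+1)*c!, (c+1) ≡ -(j'+1)
  have hcf : (((c+1).factorial : ℕ) : ZMod p) = ((c+1 : ℕ) : ZMod p) * ((c.factorial : ℕ) : ZMod p) := by
    rw [Nat.factorial_succ]; push_cast; ring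
  have hc1 : ((c+1 : ℕ) : ZMod p) = -((j'+1 : ℕ) : ZMod p) := by
    have h0 : ((c+1 : ℕ) : ZMod p) + ((j'+1 : ℕ) : ZMod p) = ((p : ℕ) : ZMod p) := by
      rw [show ((p:ℕ) : ZMod p) = (((c+1)+(j'+1) : ℕ) : ZMod p) by rw [show (c+1)+(j'+1) = p by omega]]
      push_cast; ring
    rw [ZMod.natCast_self] at h0
    linear_combination h0
  have E5 : ((uu p (p*(p*m₂ + (p-2)) + (c+1)) (j'+1) : ℕ) : ZMod p) * ((j'+1 : ℕ) : ZMod p) *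
      (((j'+1).factorial : ZMod p) * (c.factorial : ZMod p)) = -1 := by
    rw [hcf, hc1] at E3
    linear_combination -E3
  have hsq := congrArg (fun x : ZMod p => x^2) E5
  have hfp := fac_pair_sq hp (j'+1) c (by omega)
  push_cast at hfp
  calc (((uu p (p*(p*m₂ + (p-2)) + (c+1)) (j'+1) : ℕ) : ZMod p) * ((j'+1 : ℕ) : ZMod p))^2
      = (((uu p (p*(p*m₂ + (p-2)) + (c+1)) (j'+1) : ℕ) : ZMod p) * ((j'+1 : ℕ) : ZMod p))^2 *
        ((((j'+1).factorial : ZMod p) * (c.factorial : ZMod p))^2) := by rw [hfp]; ring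
    _ = (-1 : ZMod p)^2 := by rw [← hsq]; ring
    _ = 1 := by ring


lemma inv_sq_sum {p : ℕ} (hp : p.Prime) [Fact p.Prime] (hp5 : 5 ≤ p) :
    ∑ j ∈ Finset.Icc 1 (p-1), (((j : ZMod p))^2)⁻¹ = 0 := by
  have hsum : ∑ x : ZMod p, x^2 = 0 := by
    apply FiniteField.sum_pow_lt_card_sub_one (ZMod p) 2
    rw [ZMod.card]; omega
  have herase : ∑ x ∈ Finset.univ.erase (0 : ZMod p), x^2 = 0 := by
    have h := Finset.sum_erase_add Finset.univ (fun x : ZMod p => x^2) (Finset.mem_univ 0)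
    rw [hsum] at h
    have h02 : (0 : ZMod p)^2 = 0 := by ring
    rw [h02, add_zero] at h
    exact h
  have hinv : ∑ x ∈ Finset.univ.erase (0 : ZMod p), (x^2)⁻¹
      = ∑ x ∈ Finset.univ.erase (0 : ZMod p), x^2 := by
    apply Finset.sum_nbij' (i := fun x : ZMod p => x⁻¹) (j := fun x : ZMod p => x⁻¹)
    · intro a ha
      rw [Finset.mem_erase] at ha ⊢
      exact ⟨inv_ne_zero ha.1, Finset.mem_univ _⟩
    · intro a ha
      rw [Finset.mem_erase] at ha ⊢
      exact ⟨inv_ne_zero ha.1, Finset.mem_univ _⟩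
    · intro a _; exact inv_inv a
    · intro a _; exact inv_inv a
    · intro a _
      rw [← inv_pow]
  have hreindex : ∑ j ∈ Finset.Icc 1 (p-1), (((j : ZMod p))^2)⁻¹
      = ∑ x ∈ Finset.univ.erase (0 : ZMod p), (x^2)⁻¹ := by
    apply Finset.sum_nbij' (i := fun j : ℕ => (j : ZMod p)) (j := fun x : ZMod p => x.val)
    · intro a ha
      rw [Finset.mem_Icc] at ha
      rw [Finset.mem_erase]
      refine ⟨?_, Finset.mem_univ _⟩
      rw [Ne, ZMod.natCast_eq_zero_iff]
      intro hdvd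
      have := Nat.le_of_dvd (by omega) hdvd
      omega
    · intro x hx
      rw [Finset.mem_erase] at hx
      rw [Finset.mem_Icc]
      have hlt : x.val < p := ZMod.val_lt x
      have hne : x.val ≠ 0 := by
        intro h
        exact hx.1 (by rwa [ZMod.val_eq_zero] at h)
      omega
    · intro a ha
      rw [Finset.mem_Icc] at ha
      exact ZMod.val_natCast_of_lt (by omega)
    · intro x _
      simp [ZMod.natCast_val, ZMod.cast_id]
    · intro a _
      rfl
  rw [hreindex, hinv, herase]


lemma TL1 {p : ℕ} (hp : p.Prime) {s k : ℕ} (h : vv p s k = 1) :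
    Pb s k ^ 2 = p^2 * uu p s k ^ 2 := by
  conv_lhs => rw [PU p s k]
  rw [h]; ring

lemma TL2 {p : ℕ} (hp : p.Prime) {s k : ℕ} (h : 2 ≤ vv p s k) :
    ((Pb s k ^ 2 : ℕ) : ZMod (p^3)) = 0 := by
  rw [ZMod.natCast_eq_zero_iff]
  have h1 : Pb s k ^ 2 = (p ^ vv p s k) ^ 2 * uu p s k ^ 2 := by
    conv_lhs => rw [PU p s k]
    ring
  rw [h1]
  have h2 : p^3 ∣ (p ^ vv p s k)^2 := by
    rw [← pow_mul]
    exact pow_dvd_pow p (by omega)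
  exact Dvd.dvd.mul_right h2 _

lemma TLtrans {p : ℕ} (hp : p.Prime) [Fact p.Prime] {s k S K : ℕ}
    (hv : vv p s k = vv p S K) (hu : ((uu p s k : ℕ) : ZMod p) = ((uu p S K : ℕ) : ZMod p))
    (h1 : 1 ≤ vv p s k) :
    ((Pb s k ^ 2 : ℕ) : ZMod (p^3)) = ((Pb S K ^ 2 : ℕ) : ZMod (p^3)) := by
  rcases eq_or_lt_of_le h1 with he | hlt
  · have hsk : vv p s k = 1 := he.symm
    have hSK : vv p S K = 1 := by omega
    rw [TL1 hp hsk, TL1 hp hSK]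
    rw [ZMod.natCast_eq_natCast_iff]
    have hmod : uu p s k ≡ uu p S K [MOD p] := (ZMod.natCast_eq_natCast_iff _ _ _).mp hu
    have h2 : uu p s k ^ 2 ≡ uu p S K ^ 2 [MOD p] := hmod.pow 2
    have h3 := Nat.ModEq.mul_left' (c := p^2) h2
    rw [show p^2 * p = p^3 by ring] at h3
    exact h3
  · rw [TL2 hp hlt, TL2 hp (by omega : 2 ≤ vv p S K)]

lemma slot_sum {p : ℕ} (hp : p.Prime) [Fact p.Prime] (hp5 : 5 ≤ p) {n : ℕ}
    (hvv : ∀ j, 1 ≤ j → j ≤ p-1 → vv p (n-j) j = 1 ∧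
      (((uu p (n-j) j : ℕ) : ZMod p) * ((j : ℕ) : ZMod p))^2 = 1) :
    ((∑ j ∈ Finset.Icc 1 (p-1), Pb (n-j) j ^ 2 : ℕ) : ZMod (p^3)) = 0 := by
  have hsum : ∑ j ∈ Finset.Icc 1 (p-1), Pb (n-j) j ^ 2
      = p^2 * ∑ j ∈ Finset.Icc 1 (p-1), uu p (n-j) j ^ 2 := by
    rw [Finset.mul_sum]
    apply Finset.sum_congr rfl
    intro j hj
    rw [Finset.mem_Icc] at hj
    exact TL1 hp (hvv j hj.1 hj.2).1
  rw [hsum, ZMod.natCast_eq_zero_iff]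
  have hdvd : p ∣ ∑ j ∈ Finset.Icc 1 (p-1), uu p (n-j) j ^ 2 := by
    rw [← ZMod.natCast_eq_zero_iff]
    push_cast
    have hcong : ∀ j ∈ Finset.Icc 1 (p-1),
        ((uu p (n-j) j : ℕ) : ZMod p)^2 = (((j : ZMod p))^2)⁻¹ := by
      intro j hj
      rw [Finset.mem_Icc] at hj
      have h2 := (hvv j hj.1 hj.2).2
      rw [mul_pow] at h2
      exact eq_inv_of_mul_eq_one_left h2
    rw [Finset.sum_congr rfl hcong]
    exact inv_sq_sum hp hp5
  obtain ⟨x, hx⟩ := hdvd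
  rw [hx, show p^2 * (p*x) = p^3 * x by ring]
  exact Dvd.intro x rfl


lemma hterm_gen (N k : ℕ) (hk : k ≤ N) :
    (N.choose k)^2 * ((N+k).choose k)^2 = Pb (N-k) k ^ 2 := by
  rw [Pb, show N - k + k = N by omega, show N - k + 2*k = N + k by omega]
  ring

lemma main {p : ℕ} (hp : p.Prime) (hp5 : 5 ≤ p) :
    ∀ n, Dg p n →
      ((∑ k ∈ Finset.range (n+1), (n.choose k)^2 * ((n+k).choose k)^2 : ℕ) : ZMod (p^3)) = 1 := by
  haveI : Fact p.Prime := ⟨hp⟩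
  intro n
  induction n using Nat.strong_induction_on with
  | _ n IH =>
    intro hD
    rcases Nat.eq_zero_or_pos n with h0 | h0
    · subst h0; simp
    set m := n / p with hm
    set d := n % p with hdd
    have hd : d = 0 ∨ d = p - 1 := Dg_head hp.one_lt hD (by omega)
    have hdp : d < p := by rw [hdd]; exact Nat.mod_lt _ hp.pos
    have hmn : n = p * m + d := by rw [hm, hdd]; have := Nat.div_add_mod n p; omega
    have hDm : Dg p m := Dg_tail hp.one_lt hD
    have hmlt : m < n := by rw [hm]; exact Nat.div_lt_self h0 hp.one_lt
    have hIH := IH m hmlt hDm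
    have hge : p - 1 ≤ n := Dg_ge hp.one_lt hD (by omega)
    rw [Nat.cast_sum]
    rw [Nat.cast_sum] at hIH
    rw [← Finset.sum_filter_add_sum_filter_not (Finset.range (n+1)) (fun k => p ∣ k)]
    have hmult : ∑ k ∈ (Finset.range (n+1)).filter (fun k => p ∣ k),
        (((n.choose k)^2 * ((n+k).choose k)^2 : ℕ) : ZMod (p^3)) = 1 := by
      have himg : (Finset.range (n+1)).filter (fun k => p ∣ k)
          = (Finset.range (m+1)).image (fun q => p*q) := by
        ext k
        rw [Finset.mem_filter, Finset.mem_range, Finset.mem_image]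
        constructor
        · rintro ⟨hk, q, rfl⟩
          refine ⟨q, ?_, rfl⟩
          rw [Finset.mem_range]
          by_contra hcon
          push_neg at hcon
          have : p*(m+1) ≤ p*q := Nat.mul_le_mul_left p hcon
          have h9 : p*(m+1) = p*m + p := by ring
          omega
        · rintro ⟨q, hq, rfl⟩
          rw [Finset.mem_range] at hq
          have : p*q ≤ p*m := Nat.mul_le_mul_left p (by omega)
          exact ⟨by omega, ⟨q, rfl⟩⟩
      rw [himg, Finset.sum_image (by intro x _ y _ h; exact Nat.eq_of_mul_eq_mul_left hp.pos h)]
      rw [← hIH]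
      apply Finset.sum_congr rfl
      intro q hq
      rw [Finset.mem_range] at hq
      rcases Nat.eq_zero_or_pos q with hq0 | hq1
      · subst hq0; simp
      · have hqm : q ≤ m := by omega
        have hpq : p*q ≤ n := by
          have : p*q ≤ p*m := Nat.mul_le_mul_left p hqm
          omega
        rw [hterm_gen n (p*q) hpq, hterm_gen m q hqm]
        have hsb : n - p*q = p*(m-q) + d := by
          have h1 : p*(m-q) + p*q = p*m := by rw [← Nat.mul_add]; congr 1; omega
          omega
        rw [hsb]
        have htr := transfer hp hdp (m-q) q
        refine TLtrans hp htr.1 htr.2 ?_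
        rw [htr.1]
        exact MODP hp m (m-q) q (by omega) hDm hq1
    have hnonmult : ∑ k ∈ (Finset.range (n+1)).filter (fun k => ¬ p ∣ k),
        (((n.choose k)^2 * ((n+k).choose k)^2 : ℕ) : ZMod (p^3)) = 0 := by
      have hJsub : Finset.Icc 1 (p-1) ⊆ (Finset.range (n+1)).filter (fun k => ¬ p ∣ k) := by
        intro j hj
        rw [Finset.mem_Icc] at hj
        rw [Finset.mem_filter, Finset.mem_range]
        refine ⟨by omega, ?_⟩
        intro hdvd
        have := Nat.le_of_dvd (by omega) hdvd
        omega
      rw [← Finset.sum_sdiff hJsub]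
      have hrest : ∑ k ∈ ((Finset.range (n+1)).filter (fun k => ¬ p ∣ k)) \ Finset.Icc 1 (p-1),
          (((n.choose k)^2 * ((n+k).choose k)^2 : ℕ) : ZMod (p^3)) = 0 := by
        apply Finset.sum_eq_zero
        intro k hk
        rw [Finset.mem_sdiff, Finset.mem_filter, Finset.mem_range, Finset.mem_Icc] at hk
        obtain ⟨⟨hkn, hknd⟩, hknot⟩ := hk
        have hk0 : k ≠ 0 := by rintro rfl; exact hknd (dvd_zero p)
        have hkp : p ≤ k := by
          by_contra hcon
          push_neg at hcon
          exact hknot ⟨by omega, by omega⟩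
        have hkq : k = p*(k/p) + k % p := by have := Nat.div_add_mod k p; omega
        have hrp : k % p < p := Nat.mod_lt _ hp.pos
        have hr1 : 1 ≤ k % p := by
          rcases Nat.eq_zero_or_pos (k % p) with hr0 | hr0
          · exact absurd (Nat.dvd_of_mod_eq_zero hr0) hknd
          · exact hr0
        have hq1 : 1 ≤ k / p := by
          rcases Nat.eq_zero_or_pos (k / p) with hqq | hqq
          · rw [hqq] at hkq; omega
          · exact hqq
        have hvan := VANR hp hD
          (show n = (n - (p*(k/p) + k % p)) + (p*(k/p) + k % p) by omega)
          hq1 hr1 hrp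
        rw [hterm_gen n k (by omega)]
        rw [show k = p*(k/p) + k % p from hkq]
        exact TL2 hp hvan
      have hslot : ∑ j ∈ Finset.Icc 1 (p-1),
          (((n.choose j)^2 * ((n+j).choose j)^2 : ℕ) : ZMod (p^3)) = 0 := by
        have hmp : m % p = 0 ∨ m % p = p - 1 := by
          rcases Nat.eq_zero_or_pos m with hm0 | hm0
          · left; rw [hm0]; simp
          · exact Dg_head hp.one_lt hDm (by omega)
        have hm2eq : p * (m/p) + m % p = m := Nat.div_add_mod m p
        have hconv : ∀ j ∈ Finset.Icc 1 (p-1),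
            (((n.choose j)^2 * ((n+j).choose j)^2 : ℕ) : ZMod (p^3))
            = ((Pb (n-j) j ^ 2 : ℕ) : ZMod (p^3)) := by
          intro j hj
          rw [Finset.mem_Icc] at hj
          rw [hterm_gen n j (by omega)]
        rw [Finset.sum_congr rfl hconv]
        rcases hd with hd0 | hd1
        · -- d = 0 : n = p*m, m ≥ 1
          have hm1 : 1 ≤ m := by
            rcases Nat.eq_zero_or_pos m with hz | hz
            · have hpm : p*m = 0 := by rw [hz, Nat.mul_zero]
              omega
            · exact hz
          rcases hmp with hmp0 | hmp1
          · -- nonslotB : m ≡ 0 mod p, m/p ≥ 1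
            apply Finset.sum_eq_zero
            intro j hj
            rw [Finset.mem_Icc] at hj
            obtain ⟨j', rfl⟩ : ∃ j', j = j'+1 := ⟨j-1, by omega⟩
            have hm2 : 1 ≤ m/p := by
              rcases Nat.eq_zero_or_pos (m/p) with hz | hz
              · rw [hz] at hm2eq; omega
              · exact hz
            have he1 : p*(m/p - 1 + 1) = p*(m/p) := by congr 1; omega
            have he2 : p*(p*(m/p - 1) + (p-1)) + p = p*m := by
              have h3 : p*(p*(m/p-1) + (p-1)) + p = p*(p*(m/p-1) + (p-1) + 1) := by ring
              have h4 : p*(m/p-1) + (p-1) + 1 = p*(m/p-1) + p := by omega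
              have h5 : p*(m/p-1) + p = p*(m/p-1+1) := by ring
              rw [h3, h4, h5, he1]
              congr 1
              omega
            have hs : n - (j'+1) = p*(p*(m/p - 1) + (p-1)) + (p-(j'+1)) := by omega
            rw [hs]
            exact TL2 hp (nonslotB hp (m/p - 1) j' (p-(j'+1)) (by omega) (by omega))
          · -- slotB : m ≡ p-1 mod p
            rw [← Nat.cast_sum]
            apply slot_sum hp hp5
            intro j hj1 hj2
            obtain ⟨j', rfl⟩ : ∃ j', j = j'+1 := ⟨j-1, by omega⟩
            have he2 : p*(p*(m/p) + (p-2)) + p = p*m := by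
              have h3 : p*(p*(m/p) + (p-2)) + p = p*(p*(m/p) + (p-2) + 1) := by ring
              have h4 : p*(m/p) + (p-2) + 1 = p*(m/p) + (p-1) := by omega
              rw [h3, h4]
              have h5 : p*(m/p) + (p-1) = m := by omega
              rw [h5]
            have hs : n - (j'+1) = p*(p*(m/p) + (p-2)) + ((p-2-j')+1) := by omega
            rw [hs]
            exact slotB hp (m/p) j' (p-2-j') (by omega)
        · -- d = p-1 : n = p*m + (p-1)
          rcases hmp with hmp0 | hmp1
          · -- slotA : m ≡ 0 mod p
            rw [← Nat.cast_sum]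
            apply slot_sum hp hp5
            intro j hj1 hj2
            obtain ⟨j', rfl⟩ : ∃ j', j = j'+1 := ⟨j-1, by omega⟩
            have he2 : p*(p*(m/p)) = p*m := by
              have h5 : p*(m/p) = m := by omega
              rw [h5]
            have hs : n - (j'+1) = p*(p*(m/p)) + (p-2-j') := by omega
            rw [hs]
            exact slotA hp (m/p) j' (p-2-j') (by omega)
          · -- nonslotA : m ≡ p-1 mod p
            apply Finset.sum_eq_zero
            intro j hj
            rw [Finset.mem_Icc] at hj
            obtain ⟨j', rfl⟩ : ∃ j', j = j'+1 := ⟨j-1, by omega⟩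
            have he2 : p*(p*(m/p) + (p-1)) = p*m := by
              have h5 : p*(m/p) + (p-1) = m := by omega
              rw [h5]
            have hs : n - (j'+1) = p*(p*(m/p) + (p-1)) + (p-2-j') := by omega
            rw [hs]
            exact TL2 hp (nonslotA hp (m/p) j' (p-2-j') (by omega))
      rw [hrest, hslot]
      ring
    rw [hmult, hnonmult]
    ring

end AperyAux

theorem apery_aux_final (p : ℕ) (hp : p.Prime) (hp5 : 5 ≤ p) (n : ℕ)
    (hdig : ∀ e ∈ Nat.digits p n, e = 0 ∨ e = p - 1) :
    (∑ k ∈ Finset.range (n + 1), (n.choose k)^2 * ((n + k).choose k)^2) ≡ 1 [MOD p ^ 3] := by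
  haveI : Fact p.Prime := ⟨hp⟩
  have h := AperyAux.main hp hp5 n hdig
  have := (ZMod.natCast_eq_natCast_iff (∑ k ∈ Finset.range (n + 1), (n.choose k)^2 * ((n + k).choose k)^2) 1 (p^3)).mp
  apply this
  rw [h]
  norm_num

theorem apery_digits_zero_pred_mod_p_cubed (p : ℕ) (hp : p.Prime) (hp5 : 5 ≤ p) (n : ℕ)
    (hdig : ∀ e ∈ Nat.digits p n, e = 0 ∨ e = p - 1) :
    apery n ≡ 1 [MOD p ^ 3] := by
  have h := apery_aux_final p hp hp5 n hdig
  simpa [apery] using h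
end
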